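/- arXiv:2411.17109 — 3 statements merged into one kernel-verified Lean document; each statement's English description precedes it below -/
import Mathlib

section
/- Let X and Y be non-degenerate square-integrable random variables and let R(X,Y) denote the maximal correlation coefficient between them, defined as the supremum of Pearson correlations ρ(φ(X), ψ(Y)) over all measurable φ, ψ with 0 < E[φ(X)²] < ∞ and 0 < E[ψ(Y)²] < ∞. Then R(X,Y) = 0 if and only if X and Y are independent. -/
open MeasureTheory ProbabilityTheory Real

/-- Pearson correlation coefficient of two real random variables. -/
noncomputable def pearson {Ω : Type*} [MeasurableSpace Ω] (μ : Measure Ω)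
    (U V : Ω → ℝ) : ℝ :=
  (∫ ω, (U ω - ∫ ω', U ω' ∂μ) * (V ω - ∫ ω', V ω' ∂μ) ∂μ) /
    (Real.sqrt (variance U μ) * Real.sqrt (variance V μ))

/-- Maximal correlation coefficient: supremum of Pearson correlations ρ(f(X), g(Y)) over
measurable f, g with f(X), g(Y) square-integrable and non-degenerate.  (The supremum of the
empty set is `0`, corresponding to the convention for degenerate variables.) -/
noncomputable def maxCorr {Ω α β : Type*} [MeasurableSpace Ω] [MeasurableSpace α]
    [MeasurableSpace β] (μ : Measure Ω) (X : Ω → α) (Y : Ω → β) : ℝ :=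
  sSup {r | ∃ f : α → ℝ, ∃ g : β → ℝ, Measurable f ∧ Measurable g ∧
    MemLp (f ∘ X) 2 μ ∧ MemLp (g ∘ Y) 2 μ ∧
    variance (f ∘ X) μ ≠ 0 ∧ variance (g ∘ Y) μ ≠ 0 ∧
    r = pearson μ (f ∘ X) (g ∘ Y)}

section Aux
variable {Ω : Type*} [MeasurableSpace Ω] {μ : Measure Ω} [IsProbabilityMeasure μ]

lemma myIntegrableMul {U V : Ω → ℝ} (hU : MemLp U 2 μ) (hV : MemLp V 2 μ) :
    Integrable (fun ω => U ω * V ω) μ := by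
  have h : MemLp (U • V) 1 μ := by
    haveI : ENNReal.HolderTriple 2 2 1 := ⟨by rw [inv_one, ENNReal.inv_two_add_inv_two]⟩
    exact hV.smul hU
  exact memLp_one_iff_integrable.mp h

lemma myCov {U V : Ω → ℝ} (hU : MemLp U 2 μ) (hV : MemLp V 2 μ) :
    ∫ ω, (U ω - ∫ x, U x ∂μ) * (V ω - ∫ x, V x ∂μ) ∂μ
      = (∫ ω, U ω * V ω ∂μ) - (∫ x, U x ∂μ) * (∫ x, V x ∂μ) := by
  set a := ∫ x, U x ∂μ with ha
  set b := ∫ x, V x ∂μ with hb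
  have hUi : Integrable U μ := hU.integrable one_le_two
  have hVi : Integrable V μ := hV.integrable one_le_two
  have hUV : Integrable (fun ω => U ω * V ω) μ := myIntegrableMul hU hV
  have hexp : ∀ ω, (U ω - a) * (V ω - b) = U ω * V ω - a * V ω - b * U ω + a * b := by
    intro ω; ring
  have h1 : Integrable (fun ω => U ω * V ω - a * V ω) μ := hUV.sub (hVi.const_mul a)
  have h2 : Integrable (fun ω => U ω * V ω - a * V ω - b * U ω) μ := h1.sub (hUi.const_mul b)
  simp_rw [hexp]
  rw [integral_add h2 (integrable_const _), integral_sub h1 (hUi.const_mul b),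
      integral_sub hUV (hVi.const_mul a), integral_const_mul, integral_const_mul,
      integral_const]
  simp only [measure_univ, ENNReal.toReal_one, probReal_univ, smul_eq_mul, one_mul, ← ha, ← hb]
  ring

lemma myVarEq {U : Ω → ℝ} (hU : MemLp U 2 μ) :
    variance U μ = ∫ ω, (U ω - ∫ x, U x ∂μ) ^ 2 ∂μ := by
  rw [variance_eq_integral hU.1.aemeasurable]

lemma myCS {U V : Ω → ℝ} (hU : MemLp U 2 μ) (hV : MemLp V 2 μ) :
    |∫ ω, (U ω - ∫ x, U x ∂μ) * (V ω - ∫ x, V x ∂μ) ∂μ|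
      ≤ Real.sqrt (variance U μ) * Real.sqrt (variance V μ) := by
  set a := ∫ x, U x ∂μ with ha
  set b := ∫ x, V x ∂μ with hb
  have hU' : MemLp (fun ω => U ω - a) (ENNReal.ofReal 2) μ := by
    rw [show ENNReal.ofReal 2 = 2 by norm_num]
    exact hU.sub (memLp_const a)
  have hV' : MemLp (fun ω => V ω - b) (ENNReal.ofReal 2) μ := by
    rw [show ENNReal.ofReal 2 = 2 by norm_num]
    exact hV.sub (memLp_const b)
  have hpq : (2:ℝ).HolderConjugate 2 := Real.HolderConjugate.two_two
  have key := integral_mul_norm_le_Lp_mul_Lq hpq hU' hV'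
  have h1 : |∫ ω, (U ω - a) * (V ω - b) ∂μ| ≤ ∫ ω, ‖U ω - a‖ * ‖V ω - b‖ ∂μ := by
    calc |∫ ω, (U ω - a) * (V ω - b) ∂μ| ≤ ∫ ω, ‖(U ω - a) * (V ω - b)‖ ∂μ :=
          by rw [← Real.norm_eq_abs]; exact norm_integral_le_integral_norm _
      _ = ∫ ω, ‖U ω - a‖ * ‖V ω - b‖ ∂μ := by simp [norm_mul]
  have hUeq : ∫ ω, ‖U ω - a‖ ^ (2:ℝ) ∂μ = variance U μ := by
    rw [myVarEq hU, ← ha]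
    congr 1; funext ω
    rw [Real.rpow_two, Real.norm_eq_abs, sq_abs]
  have hVeq : ∫ ω, ‖V ω - b‖ ^ (2:ℝ) ∂μ = variance V μ := by
    rw [myVarEq hV, ← hb]
    congr 1; funext ω
    rw [Real.rpow_two, Real.norm_eq_abs, sq_abs]
  rw [hUeq, hVeq, ← Real.sqrt_eq_rpow, ← Real.sqrt_eq_rpow] at key
  exact h1.trans key


lemma myPearsonAbsLe {U V : Ω → ℝ} (hU : MemLp U 2 μ) (hV : MemLp V 2 μ) :
    |pearson μ U V| ≤ 1 := by
  rw [pearson]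
  rcases (mul_nonneg (Real.sqrt_nonneg _) (Real.sqrt_nonneg _) :
      (0:ℝ) ≤ Real.sqrt (variance U μ) * Real.sqrt (variance V μ)).eq_or_lt with h | h
  · rw [← h, div_zero]; norm_num
  · rw [abs_div, abs_of_pos h, div_le_one h]
    exact myCS hU hV

lemma myPearsonNeg (U V : Ω → ℝ) :
    pearson μ (fun ω => -U ω) V = -pearson μ U V := by
  rw [pearson, pearson]
  have h1 : ∫ ω', -U ω' ∂μ = -∫ ω', U ω' ∂μ := integral_neg U
  have h2 : variance (fun ω => -U ω) μ = variance U μ := by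
    have := variance_const_mul (-1) U μ
    simp only [neg_one_mul, neg_one_sq, one_mul] at this
    exact this
  rw [h2]
  have h3 : (∫ ω, (-U ω - ∫ ω', -U ω' ∂μ) * (V ω - ∫ ω', V ω' ∂μ) ∂μ)
      = -∫ ω, (U ω - ∫ ω', U ω' ∂μ) * (V ω - ∫ ω', V ω' ∂μ) ∂μ := by
    rw [← integral_neg]
    apply integral_congr_ae
    apply ae_of_all
    intro ω
    rw [h1]
    ring
  rw [h3, neg_div]

lemma myIndInt {A : Set Ω} (hA : MeasurableSet A) :
    ∫ ω, A.indicator (fun _ => (1:ℝ)) ω ∂μ = (μ A).toReal := by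
  rw [integral_indicator_const (1:ℝ) hA, smul_eq_mul, mul_one, measureReal_def]

lemma myIndVar {A : Set Ω} (hA : MeasurableSet A) :
    variance (A.indicator fun _ => (1:ℝ)) μ = (μ A).toReal - (μ A).toReal ^ 2 := by
  rw [variance_eq_sub (memLp_indicator_const 2 hA 1 (Or.inr (measure_ne_top μ A)))]
  have h1 : (A.indicator (fun _ => (1:ℝ))) ^ 2 = A.indicator (fun _ => 1) := by
    funext ω; by_cases h : ω ∈ A <;> simp [Set.indicator_apply, h]
  rw [h1]
  have h2 : μ[A.indicator (fun _ => (1:ℝ))] = (μ A).toReal := myIndInt hA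
  rw [h2]


end Aux

/-- For non-degenerate square-integrable real random variables, the maximal correlation
coefficient vanishes iff the variables are independent. -/
theorem maxCorr_eq_zero_iff_indepFun {Ω : Type*} [MeasurableSpace Ω]
    (μ : Measure Ω) [IsProbabilityMeasure μ] (X Y : Ω → ℝ)
    (hX : Measurable X) (hY : Measurable Y)
    (hX2 : MemLp X 2 μ) (hY2 : MemLp Y 2 μ)
    (hXnd : variance X μ ≠ 0) (hYnd : variance Y μ ≠ 0) :
    maxCorr μ X Y = 0 ↔ IndepFun X Y μ := by

  set S : Set ℝ := {r | ∃ f : ℝ → ℝ, ∃ g : ℝ → ℝ, Measurable f ∧ Measurable g ∧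
    MemLp (f ∘ X) 2 μ ∧ MemLp (g ∘ Y) 2 μ ∧
    variance (f ∘ X) μ ≠ 0 ∧ variance (g ∘ Y) μ ≠ 0 ∧
    r = pearson μ (f ∘ X) (g ∘ Y)} with hSdef
  have hmc : maxCorr μ X Y = sSup S := rfl
  have hbdd : BddAbove S := by
    refine ⟨1, fun r hr => ?_⟩
    obtain ⟨f, g, hf, hg, hfX, hgY, _, _, hre⟩ := hr
    rw [hre]
    exact (abs_le.mp (myPearsonAbsLe hfX hgY)).2
  have hneg : ∀ r ∈ S, -r ∈ S := by
    intro r hr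
    obtain ⟨f, g, hf, hg, hfX, hgY, hfnd, hgnd, hre⟩ := hr
    refine ⟨fun x => -(f x), g, hf.neg, hg, hfX.neg, hgY, ?_, hgnd, ?_⟩
    · have hv : variance ((fun x => -(f x)) ∘ X) μ = variance (f ∘ X) μ := by
        have h := variance_const_mul (-1) (f ∘ X) μ
        simp only [neg_one_mul, neg_one_sq, one_mul] at h
        exact h
      rw [hv]; exact hfnd
    · rw [hre]
      exact (myPearsonNeg (f ∘ X) (g ∘ Y)).symm
  constructor
  · intro h0
    rw [hmc] at h0
    have hall : ∀ r ∈ S, r = 0 := by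
      intro r hr
      have h1 : r ≤ 0 := h0 ▸ le_csSup hbdd hr
      have h2 : -r ≤ 0 := h0 ▸ le_csSup hbdd (hneg r hr)
      linarith
    rw [indepFun_iff_measure_inter_preimage_eq_mul]
    intro s t hs ht
    set A := X ⁻¹' s with hAdef
    set B := Y ⁻¹' t with hBdef
    have hA : MeasurableSet A := hX hs
    have hB : MeasurableSet B := hY ht
    by_cases hA0 : μ A = 0
    · rw [hA0, zero_mul]
      exact measure_mono_null Set.inter_subset_left hA0
    by_cases hB0 : μ B = 0
    · rw [hB0, mul_zero]
      exact measure_mono_null Set.inter_subset_right hB0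
    by_cases hA1 : μ A = 1
    · rw [hA1, one_mul, Set.inter_comm]
      exact measure_inter_conull (by rw [prob_compl_eq_zero_iff hA]; exact hA1)
    by_cases hB1 : μ B = 1
    · rw [hB1, mul_one]
      exact measure_inter_conull (by rw [prob_compl_eq_zero_iff hB]; exact hB1)
    -- nondegenerate indicators
    set f : ℝ → ℝ := s.indicator (fun _ => 1) with hfdef
    set g : ℝ → ℝ := t.indicator (fun _ => 1) with hgdef
    have hfc : f ∘ X = A.indicator (fun _ => (1:ℝ)) := by
      funext ω
      by_cases h : X ω ∈ s <;>
        simp [hfdef, hAdef, Set.indicator_apply, Set.mem_preimage, Function.comp, h]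
    have hgc : g ∘ Y = B.indicator (fun _ => (1:ℝ)) := by
      funext ω
      by_cases h : Y ω ∈ t <;>
        simp [hgdef, hBdef, Set.indicator_apply, Set.mem_preimage, Function.comp, h]
    have hfm : Measurable f := measurable_const.indicator hs
    have hgm : Measurable g := measurable_const.indicator ht
    have hU2 : MemLp (f ∘ X) 2 μ := by
      rw [hfc]; exact memLp_indicator_const 2 hA 1 (Or.inr (measure_ne_top μ A))
    have hV2 : MemLp (g ∘ Y) 2 μ := by
      rw [hgc]; exact memLp_indicator_const 2 hB 1 (Or.inr (measure_ne_top μ B))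
    have haApos : 0 < (μ A).toReal := ENNReal.toReal_pos hA0 (measure_ne_top μ A)
    have haAlt : (μ A).toReal < 1 := by
      have : μ A < 1 := lt_of_le_of_ne prob_le_one hA1
      simpa using (ENNReal.toReal_lt_toReal (measure_ne_top μ A) ENNReal.one_ne_top).mpr this
    have haBpos : 0 < (μ B).toReal := ENNReal.toReal_pos hB0 (measure_ne_top μ B)
    have haBlt : (μ B).toReal < 1 := by
      have : μ B < 1 := lt_of_le_of_ne prob_le_one hB1
      simpa using (ENNReal.toReal_lt_toReal (measure_ne_top μ B) ENNReal.one_ne_top).mpr this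
    have hUvar : variance (f ∘ X) μ ≠ 0 := by
      rw [hfc, myIndVar hA]
      have : (μ A).toReal - (μ A).toReal ^ 2 = (μ A).toReal * (1 - (μ A).toReal) := by ring
      rw [this]
      exact ne_of_gt (mul_pos haApos (by linarith))
    have hVvar : variance (g ∘ Y) μ ≠ 0 := by
      rw [hgc, myIndVar hB]
      have : (μ B).toReal - (μ B).toReal ^ 2 = (μ B).toReal * (1 - (μ B).toReal) := by ring
      rw [this]
      exact ne_of_gt (mul_pos haBpos (by linarith))
    have hmem : pearson μ (f ∘ X) (g ∘ Y) ∈ S :=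
      ⟨f, g, hfm, hgm, hU2, hV2, hUvar, hVvar, rfl⟩
    have hp0 : pearson μ (f ∘ X) (g ∘ Y) = 0 := hall _ hmem
    -- extract covariance = 0
    have hden : Real.sqrt (variance (f ∘ X) μ) * Real.sqrt (variance (g ∘ Y) μ) ≠ 0 := by
      apply ne_of_gt
      apply mul_pos <;>
        exact Real.sqrt_pos.mpr (lt_of_le_of_ne (variance_nonneg _ _) (Ne.symm ‹_›))
    rw [pearson, div_eq_zero_iff] at hp0
    have hcov : (∫ ω, ((f ∘ X) ω - ∫ ω', (f ∘ X) ω' ∂μ) *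
        ((g ∘ Y) ω - ∫ ω', (g ∘ Y) ω' ∂μ) ∂μ) = 0 := hp0.resolve_right hden
    rw [myCov hU2 hV2] at hcov
    have hIU : ∫ ω, (f ∘ X) ω ∂μ = (μ A).toReal := by rw [hfc]; exact myIndInt hA
    have hIV : ∫ ω, (g ∘ Y) ω ∂μ = (μ B).toReal := by rw [hgc]; exact myIndInt hB
    have hIUV : ∫ ω, (f ∘ X) ω * (g ∘ Y) ω ∂μ = (μ (A ∩ B)).toReal := by
      have hprod : (fun ω => (f ∘ X) ω * (g ∘ Y) ω)
          = (A ∩ B).indicator (fun _ => (1:ℝ)) := by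
        funext ω
        rw [hfc, hgc]
        by_cases h1 : ω ∈ A <;> by_cases h2 : ω ∈ B <;>
          simp [Set.indicator_apply, h1, h2]
      rw [hprod]
      exact myIndInt (hA.inter hB)
    rw [hIU, hIV, hIUV, sub_eq_zero] at hcov
    have : (μ (A ∩ B)).toReal = (μ A * μ B).toReal := by
      rw [ENNReal.toReal_mul]; exact hcov
    exact (ENNReal.toReal_eq_toReal_iff' (measure_ne_top μ _)
      (ENNReal.mul_ne_top (measure_ne_top μ _) (measure_ne_top μ _))).mp this
  · intro hind
    have hz : ∀ r ∈ S, r = 0 := by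
      rintro r ⟨f, g, hf, hg, hfX, hgY, _, _, hre⟩
      rw [hre, pearson, myCov hfX hgY]
      have hm : (∫ ω, (f ∘ X) ω * (g ∘ Y) ω ∂μ)
          = (∫ ω, (f ∘ X) ω ∂μ) * (∫ ω, (g ∘ Y) ω ∂μ) :=
        (hind.comp hf hg).integral_mul_eq_mul_integral hfX.1 hgY.1
      rw [hm, sub_self, zero_div]
    have h0mem : (0:ℝ) ∈ S := by
      refine ⟨id, id, measurable_id, measurable_id, hX2, hY2, hXnd, hYnd, ?_⟩
      have : pearson μ X Y = 0 := by
        rw [pearson, myCov hX2 hY2]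
        have hm : (∫ ω, X ω * Y ω ∂μ) = (∫ ω, X ω ∂μ) * (∫ ω, Y ω ∂μ) :=
          hind.integral_mul_eq_mul_integral hX2.1 hY2.1
        rw [hm, sub_self, zero_div]
      exact this.symm
    have hS0 : S = {0} := Set.eq_singleton_iff_unique_mem.mpr ⟨h0mem, hz⟩
    rw [hmc, hS0, csSup_singleton]
end

section
/- Suppose (X₁,Y₁) and (X₂,Y₂) are independent random vectors. Then R((X₁,X₂),(Y₁,Y₂)) = max(R(X₁,Y₁), R(X₂,Y₂)) (Csáki–Fischer identity). -/
open MeasureTheory ProbabilityTheory Real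

namespace CF

variable {Ω : Type*} [MeasurableSpace Ω] {μ : Measure Ω} {U V : Ω → ℝ}

lemma integrable_mul₂ (hU : MemLp U 2 μ) (hV : MemLp V 2 μ) :
    Integrable (fun ω => U ω * V ω) μ := by
  rw [← memLp_one_iff_integrable]
  have h := MemLp.smul (E := ℝ) (𝕜 := ℝ) (p := 2) (q := 2) (r := 1) hV hU
  exact (by simpa [smul_eq_mul] using h : MemLp (U * V) 1 μ)

lemma abs_integral_mul_le (hU : MemLp U 2 μ) (hV : MemLp V 2 μ) :
    |∫ ω, U ω * V ω ∂μ| ≤ Real.sqrt (∫ ω, U ω ^ 2 ∂μ) * Real.sqrt (∫ ω, V ω ^ 2 ∂μ) := by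
  have h2 : (2:ℝ).HolderConjugate 2 := Real.HolderConjugate.two_two
  have key := integral_mul_norm_le_Lp_mul_Lq (μ := μ) h2 (f := U) (g := V)
    (by simpa using hU) (by simpa using hV)
  have e1 : ∀ (W : Ω → ℝ), (∫ ω, ‖W ω‖ ^ (2:ℝ) ∂μ) = ∫ ω, W ω ^ 2 ∂μ := fun W =>
    integral_congr_ae (Filter.Eventually.of_forall fun ω => by
      show ‖W ω‖ ^ (2:ℝ) = W ω ^ 2
      rw [Real.rpow_two, Real.norm_eq_abs, sq_abs])
  rw [e1, e1] at key
  calc |∫ ω, U ω * V ω ∂μ| ≤ ∫ ω, ‖U ω‖ * ‖V ω‖ ∂μ := by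
        simpa [Real.norm_eq_abs, abs_mul] using
          norm_integral_le_integral_norm (μ := μ) (f := fun ω => U ω * V ω)
    _ ≤ (∫ ω, U ω ^ 2 ∂μ) ^ (1/(2:ℝ)) * (∫ ω, V ω ^ 2 ∂μ) ^ (1/(2:ℝ)) := key
    _ = Real.sqrt (∫ ω, U ω ^ 2 ∂μ) * Real.sqrt (∫ ω, V ω ^ 2 ∂μ) := by
        rw [Real.sqrt_eq_rpow, Real.sqrt_eq_rpow]

lemma sq_integral_le [IsProbabilityMeasure μ] (hU : MemLp U 2 μ) :
    (∫ ω, U ω ∂μ) ^ 2 ≤ ∫ ω, U ω ^ 2 ∂μ := by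
  have h := abs_integral_mul_le hU (memLp_const (1:ℝ))
  simp only [mul_one, one_pow, integral_const, measure_univ, ENNReal.toReal_one, smul_eq_mul,
    Real.sqrt_one, probReal_univ] at h
  have := pow_le_pow_left₀ (abs_nonneg _) h 2
  rwa [sq_abs, Real.sq_sqrt (integral_nonneg fun ω => sq_nonneg _)] at this

end CF

section Chunk2

open MeasureTheory ProbabilityTheory Real
namespace CF
variable {Ω : Type*} [MeasurableSpace Ω] {μ : Measure Ω} {U V : Ω → ℝ}

lemma variance_eq_integral_sq [IsProbabilityMeasure μ] (hU : MemLp U 2 μ) :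
    variance U μ = ∫ ω, (U ω - ∫ ω', U ω' ∂μ) ^ 2 ∂μ := by
  rw [variance_eq_integral hU.aestronglyMeasurable.aemeasurable]

lemma abs_pearson_le_one [IsProbabilityMeasure μ] (hU : MemLp U 2 μ) (hV : MemLp V 2 μ) :
    |pearson μ U V| ≤ 1 := by
  have hU0 : MemLp (fun ω => U ω - ∫ ω', U ω' ∂μ) 2 μ := hU.sub (memLp_const _)
  have hV0 : MemLp (fun ω => V ω - ∫ ω', V ω' ∂μ) 2 μ := hV.sub (memLp_const _)
  have hnum := abs_integral_mul_le hU0 hV0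
  rw [pearson, abs_div]
  rcases eq_or_ne (Real.sqrt (variance U μ) * Real.sqrt (variance V μ)) 0 with h | h
  · rw [h]
    simp
  · have hpos : 0 < Real.sqrt (variance U μ) * Real.sqrt (variance V μ) :=
      lt_of_le_of_ne (by positivity) (Ne.symm h)
    rw [abs_of_pos hpos, div_le_one hpos]
    calc |∫ ω, (U ω - ∫ ω', U ω' ∂μ) * (V ω - ∫ ω', V ω' ∂μ) ∂μ|
        ≤ Real.sqrt (∫ ω, (U ω - ∫ ω', U ω' ∂μ) ^ 2 ∂μ) *
          Real.sqrt (∫ ω, (V ω - ∫ ω', V ω' ∂μ) ^ 2 ∂μ) := hnum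
      _ = Real.sqrt (variance U μ) * Real.sqrt (variance V μ) := by
          rw [variance_eq_integral_sq hU, variance_eq_integral_sq hV]

lemma pearson_neg_right : pearson μ U (fun ω => - V ω) = - pearson μ U V := by
  rw [pearson, pearson]
  have hv : variance (fun ω => -V ω) μ = variance V μ := by
    have := variance_const_mul (-1 : ℝ) V μ
    simpa [neg_one_mul] using this
  rw [hv]
  have : (∫ ω, (U ω - ∫ ω', U ω' ∂μ) * (-V ω - ∫ ω', -V ω' ∂μ) ∂μ)
      = - ∫ ω, (U ω - ∫ ω', U ω' ∂μ) * (V ω - ∫ ω', V ω' ∂μ) ∂μ := by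
    rw [← integral_neg]
    refine integral_congr_ae (Filter.Eventually.of_forall fun ω => ?_)
    rw [integral_neg]
    ring
  rw [this, neg_div]

section Map
variable {E : Type*} [MeasurableSpace E] {T : Ω → E} {u v : E → ℝ}

lemma variance_map' (hT : Measurable T) (hu : Measurable u) :
    variance u (μ.map T) = variance (u ∘ T) μ := by
  have hm : ∫ e, u e ∂(μ.map T) = ∫ ω, (u ∘ T) ω ∂μ :=
    integral_map hT.aemeasurable hu.aestronglyMeasurable
  rw [variance, variance, evariance, evariance, hm,
    lintegral_map (by fun_prop) hT]
  rfl

lemma pearson_map (hT : Measurable T) (hu : Measurable u) (hv : Measurable v) :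
    pearson (μ.map T) u v = pearson μ (u ∘ T) (v ∘ T) := by
  rw [pearson, pearson, variance_map' hT hu, variance_map' hT hv,
    integral_map (f := fun e => (u e - ∫ e', u e' ∂(μ.map T)) * (v e - ∫ e', v e' ∂(μ.map T)))
      hT.aemeasurable
      (((hu.sub measurable_const).mul (hv.sub measurable_const)).aestronglyMeasurable),
    integral_map hT.aemeasurable hu.aestronglyMeasurable,
    integral_map hT.aemeasurable hv.aestronglyMeasurable]
  rfl

end Map

def mcSet {Ω α β : Type*} [MeasurableSpace Ω] [MeasurableSpace α] [MeasurableSpace β]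
    (μ : Measure Ω) (X : Ω → α) (Y : Ω → β) : Set ℝ :=
  {r | ∃ f : α → ℝ, ∃ g : β → ℝ, Measurable f ∧ Measurable g ∧
    MemLp (f ∘ X) 2 μ ∧ MemLp (g ∘ Y) 2 μ ∧
    variance (f ∘ X) μ ≠ 0 ∧ variance (g ∘ Y) μ ≠ 0 ∧
    r = pearson μ (f ∘ X) (g ∘ Y)}

lemma maxCorr_def {Ω α β : Type*} [MeasurableSpace Ω] [MeasurableSpace α] [MeasurableSpace β]
    (μ : Measure Ω) (X : Ω → α) (Y : Ω → β) : maxCorr μ X Y = sSup (mcSet μ X Y) := rfl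

variable {α β : Type*} [MeasurableSpace α] [MeasurableSpace β] {X : Ω → α} {Y : Ω → β}

lemma mcSet_bddAbove [IsProbabilityMeasure μ] : BddAbove (mcSet μ X Y) := by
  refine ⟨1, fun r hr => ?_⟩
  obtain ⟨f, g, hf, hg, hf2, hg2, _, _, hre⟩ := hr
  have h := abs_pearson_le_one hf2 hg2
  rw [hre]
  exact le_trans (le_abs_self _) h

lemma neg_mem_mcSet {r : ℝ} (hr : r ∈ mcSet μ X Y) : -r ∈ mcSet μ X Y := by
  obtain ⟨f, g, hf, hg, hf2, hg2, hvf, hvg, hre⟩ := hr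
  have hcomp : ((fun b => - g b) ∘ Y) = fun ω => - (g ∘ Y) ω := rfl
  have hvg' : variance ((fun b => - g b) ∘ Y) μ = variance (g ∘ Y) μ := by
    rw [hcomp]
    have := variance_const_mul (-1 : ℝ) (g ∘ Y) μ
    simpa [neg_one_mul] using this
  refine ⟨f, fun b => - g b, hf, hg.neg, hf2, ?_, hvf, by rw [hvg']; exact hvg, ?_⟩
  · rw [hcomp]
    exact hg2.neg
  · rw [hre, hcomp, ← pearson_neg_right]

lemma maxCorr_nonneg [IsProbabilityMeasure μ] : 0 ≤ maxCorr μ X Y := by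
  rw [maxCorr_def]
  rcases (mcSet μ X Y).eq_empty_or_nonempty with h | ⟨r, hr⟩
  · rw [h, Real.sSup_empty]
  · have h1 := le_csSup (mcSet_bddAbove (μ := μ)) hr
    have h2 := le_csSup (mcSet_bddAbove (μ := μ)) (neg_mem_mcSet hr)
    linarith

lemma mcSet_comp_eq {E : Type*} [MeasurableSpace E] {T : Ω → E} {A : E → α} {B : E → β}
    (hT : Measurable T) (hA : Measurable A) (hB : Measurable B) :
    mcSet μ (A ∘ T) (B ∘ T) = mcSet (μ.map T) A B := by
  ext r
  constructor
  · rintro ⟨f, g, hf, hg, hf2, hg2, hvf, hvg, hre⟩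
    refine ⟨f, g, hf, hg, ?_, ?_, ?_, ?_, ?_⟩
    · exact (memLp_map_measure_iff ((hf.comp hA).aestronglyMeasurable) hT.aemeasurable).2 hf2
    · exact (memLp_map_measure_iff ((hg.comp hB).aestronglyMeasurable) hT.aemeasurable).2 hg2
    · rw [variance_map' hT (hf.comp hA)]; exact hvf
    · rw [variance_map' hT (hg.comp hB)]; exact hvg
    · rw [pearson_map hT (hf.comp hA) (hg.comp hB)]; exact hre
  · rintro ⟨f, g, hf, hg, hf2, hg2, hvf, hvg, hre⟩
    refine ⟨f, g, hf, hg, ?_, ?_, ?_, ?_, ?_⟩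
    · exact (memLp_map_measure_iff ((hf.comp hA).aestronglyMeasurable) hT.aemeasurable).1 hf2
    · exact (memLp_map_measure_iff ((hg.comp hB).aestronglyMeasurable) hT.aemeasurable).1 hg2
    · rwa [variance_map' hT (hf.comp hA)] at hvf
    · rwa [variance_map' hT (hg.comp hB)] at hvg
    · rwa [pearson_map hT (hf.comp hA) (hg.comp hB)] at hre

lemma mcSet_comp_subset {α' β' : Type*} [MeasurableSpace α'] [MeasurableSpace β']
    {A : α' → α} {B : β' → β} (hA : Measurable A) (hB : Measurable B)
    (X' : Ω → α') (Y' : Ω → β') :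
    mcSet μ (A ∘ X') (B ∘ Y') ⊆ mcSet μ X' Y' := by
  rintro r ⟨f, g, hf, hg, hf2, hg2, hvf, hvg, hre⟩
  exact ⟨f ∘ A, g ∘ B, hf.comp hA, hg.comp hB, hf2, hg2, hvf, hvg, hre⟩

end CF
end Chunk2
section Chunk4
open MeasureTheory ProbabilityTheory Real
namespace CF

lemma sqrt_cs {a b c d : ℝ} (ha : 0 ≤ a) (hb : 0 ≤ b) (hc : 0 ≤ c) (hd : 0 ≤ d) :
    Real.sqrt a * Real.sqrt c + Real.sqrt b * Real.sqrt d ≤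
      Real.sqrt (a + b) * Real.sqrt (c + d) := by
  set x := Real.sqrt a; set y := Real.sqrt b; set z := Real.sqrt c; set w := Real.sqrt d
  have hx : x ^ 2 = a := Real.sq_sqrt ha
  have hy : y ^ 2 = b := Real.sq_sqrt hb
  have hz : z ^ 2 = c := Real.sq_sqrt hc
  have hw : w ^ 2 = d := Real.sq_sqrt hd
  have h1 : x * z + y * w ≤ Real.sqrt ((a + b) * (c + d)) := by
    calc x * z + y * w ≤ |x * z + y * w| := le_abs_self _
      _ = Real.sqrt ((x * z + y * w) ^ 2) := (Real.sqrt_sq_eq_abs _).symm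
      _ ≤ Real.sqrt ((a + b) * (c + d)) := Real.sqrt_le_sqrt (by nlinarith [sq_nonneg (x * w - y * z)])
  rwa [Real.sqrt_mul (by linarith) ] at h1

variable {γ : Type*} [MeasurableSpace γ] {ν : Measure γ}

lemma center_mul [IsProbabilityMeasure ν] {w₁ w₂ : γ → ℝ}
    (h1 : MemLp w₁ 2 ν) (h2 : MemLp w₂ 2 ν) :
    ∫ z, (w₁ z - ∫ z', w₁ z' ∂ν) * (w₂ z - ∫ z', w₂ z' ∂ν) ∂ν
      = ∫ z, w₁ z * w₂ z ∂ν - (∫ z', w₁ z' ∂ν) * (∫ z', w₂ z' ∂ν) := by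
  have i1 : Integrable w₁ ν := h1.integrable one_le_two
  have i2 : Integrable w₂ ν := h2.integrable one_le_two
  have i12 : Integrable (fun z => w₁ z * w₂ z) ν := integrable_mul₂ h1 h2
  set m := ∫ z', w₁ z' ∂ν
  set n := ∫ z', w₂ z' ∂ν
  have hfe : (fun z => (w₁ z - m) * (w₂ z - n)) =
      fun z => w₁ z * w₂ z - (n * w₁ z + (m * w₂ z - m * n)) := by
    funext z; ring
  have ia : Integrable (fun z => n * w₁ z) ν := i1.const_mul n
  have ib : Integrable (fun z => m * w₂ z) ν := i2.const_mul m
  have ic : Integrable (fun z => m * w₂ z - m * n) ν := ib.sub (integrable_const _)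
  have id' : Integrable (fun z => n * w₁ z + (m * w₂ z - m * n)) ν := ia.add ic
  rw [hfe, integral_sub i12 id', integral_add ia ic, integral_sub ib (integrable_const _),
    integral_const_mul, integral_const_mul, integral_const]
  simp only [measure_univ, ENNReal.toReal_one, smul_eq_mul, one_mul, probReal_univ]
  ring

lemma center_sq [IsProbabilityMeasure ν] {w : γ → ℝ} (hw : MemLp w 2 ν) :
    ∫ z, (w z - ∫ z', w z' ∂ν) ^ 2 ∂ν = ∫ z, w z ^ 2 ∂ν - (∫ z', w z' ∂ν) ^ 2 := by
  have h := center_mul hw hw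
  simpa [← sq] using h

lemma cov_pair_le {δ₁ δ₂ : Type*} [MeasurableSpace δ₁] [MeasurableSpace δ₂]
    (ν : Measure (δ₁ × δ₂)) [IsProbabilityMeasure ν] {u : δ₁ → ℝ} {v : δ₂ → ℝ}
    (hu : Measurable u) (hv : Measurable v)
    (hu2 : MemLp (fun p : δ₁ × δ₂ => u p.1) 2 ν) (hv2 : MemLp (fun p : δ₁ × δ₂ => v p.2) 2 ν)
    (hum : (∫ p, u p.1 ∂ν) = 0) (hvm : (∫ p, v p.2 ∂ν) = 0) :
    ∫ p, u p.1 * v p.2 ∂ν ≤ maxCorr ν Prod.fst Prod.snd *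
      (Real.sqrt (∫ p, u p.1 ^ 2 ∂ν) * Real.sqrt (∫ p, v p.2 ^ 2 ∂ν)) := by
  set P := ∫ p, u p.1 ^ 2 ∂ν with hPdef
  set Q := ∫ p, v p.2 ^ 2 ∂ν with hQdef
  have hP0 : 0 ≤ P := integral_nonneg fun p => sq_nonneg _
  have hQ0 : 0 ≤ Q := integral_nonneg fun p => sq_nonneg _
  have hCS : |∫ p, u p.1 * v p.2 ∂ν| ≤ Real.sqrt P * Real.sqrt Q := abs_integral_mul_le hu2 hv2
  by_cases hPz : P = 0
  · have h0 : Real.sqrt P * Real.sqrt Q = 0 := by rw [hPz, Real.sqrt_zero, zero_mul]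
    calc ∫ p, u p.1 * v p.2 ∂ν ≤ |∫ p, u p.1 * v p.2 ∂ν| := le_abs_self _
      _ ≤ Real.sqrt P * Real.sqrt Q := hCS
      _ = 0 := h0
      _ ≤ _ := by rw [h0, mul_zero]
  by_cases hQz : Q = 0
  · have h0 : Real.sqrt P * Real.sqrt Q = 0 := by rw [hQz, Real.sqrt_zero, mul_zero]
    calc ∫ p, u p.1 * v p.2 ∂ν ≤ |∫ p, u p.1 * v p.2 ∂ν| := le_abs_self _
      _ ≤ Real.sqrt P * Real.sqrt Q := hCS
      _ = 0 := h0
      _ ≤ _ := by rw [h0, mul_zero]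
  have hvaru : variance (fun p : δ₁ × δ₂ => u p.1) ν = P := by
    rw [variance_eq_integral hu2.aestronglyMeasurable.aemeasurable]
    exact integral_congr_ae (Filter.Eventually.of_forall fun p => by simp [hum])
  have hvarv : variance (fun p : δ₁ × δ₂ => v p.2) ν = Q := by
    rw [variance_eq_integral hv2.aestronglyMeasurable.aemeasurable]
    exact integral_congr_ae (Filter.Eventually.of_forall fun p => by simp [hvm])
  have member : pearson ν (u ∘ Prod.fst) (v ∘ Prod.snd) ∈ mcSet ν Prod.fst Prod.snd :=
    ⟨u, v, hu, hv, hu2, hv2, by rw [show variance (u ∘ Prod.fst) ν = P from hvaru]; exact hPz,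
      by rw [show variance (v ∘ Prod.snd) ν = Q from hvarv]; exact hQz, rfl⟩
  have hle : pearson ν (u ∘ Prod.fst) (v ∘ Prod.snd) ≤ maxCorr ν Prod.fst Prod.snd := by
    rw [maxCorr_def]
    exact le_csSup mcSet_bddAbove member
  have hpe : pearson ν (u ∘ Prod.fst) (v ∘ Prod.snd) =
      (∫ p, u p.1 * v p.2 ∂ν) / (Real.sqrt P * Real.sqrt Q) := by
    rw [pearson, show variance (u ∘ Prod.fst) ν = P from hvaru,
      show variance (v ∘ Prod.snd) ν = Q from hvarv,
      show (∫ ω', (u ∘ Prod.fst) ω' ∂ν) = 0 from hum,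
      show (∫ ω', (v ∘ Prod.snd) ω' ∂ν) = 0 from hvm]
    congr 1
    refine integral_congr_ae (Filter.Eventually.of_forall fun p => ?_)
    simp [Function.comp]
  have hD : 0 < Real.sqrt P * Real.sqrt Q :=
    mul_pos (Real.sqrt_pos.2 (lt_of_le_of_ne hP0 (Ne.symm hPz)))
      (Real.sqrt_pos.2 (lt_of_le_of_ne hQ0 (Ne.symm hQz)))
  rw [hpe, div_le_iff₀ hD] at hle
  exact hle

end CF
end Chunk4
section Chunk5
open MeasureTheory ProbabilityTheory Real
namespace CF

variable {α₁ β₁ α₂ β₂ : Type*} [MeasurableSpace α₁] [MeasurableSpace β₁]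
  [MeasurableSpace α₂] [MeasurableSpace β₂]
  {ν₁ : Measure (α₁ × β₁)} {ν₂ : Measure (α₂ × β₂)}

lemma core0 [IsProbabilityMeasure ν₁] [IsProbabilityMeasure ν₂]
    {f : α₁ × α₂ → ℝ} {g : β₁ × β₂ → ℝ} (hf : Measurable f) (hg : Measurable g)
    (hF : MemLp (fun p : (α₁ × β₁) × (α₂ × β₂) => f (p.1.1, p.2.1)) 2 (ν₁.prod ν₂))
    (hG : MemLp (fun p : (α₁ × β₁) × (α₂ × β₂) => g (p.1.2, p.2.2)) 2 (ν₁.prod ν₂))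
    (hFm : (∫ p, f (p.1.1, p.2.1) ∂(ν₁.prod ν₂)) = 0)
    (hGm : (∫ p, g (p.1.2, p.2.2) ∂(ν₁.prod ν₂)) = 0) :
    ∫ p, f (p.1.1, p.2.1) * g (p.1.2, p.2.2) ∂(ν₁.prod ν₂) ≤
      max (maxCorr ν₁ Prod.fst Prod.snd) (maxCorr ν₂ Prod.fst Prod.snd) *
        (Real.sqrt (∫ p, f (p.1.1, p.2.1) ^ 2 ∂(ν₁.prod ν₂)) *
         Real.sqrt (∫ p, g (p.1.2, p.2.2) ^ 2 ∂(ν₁.prod ν₂))) := by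
  have hRn1 : (0:ℝ) ≤ maxCorr ν₁ Prod.fst Prod.snd := maxCorr_nonneg
  have hRn2 : (0:ℝ) ≤ maxCorr ν₂ Prod.fst Prod.snd := maxCorr_nonneg
  have hM0 : (0:ℝ) ≤ max (maxCorr ν₁ Prod.fst Prod.snd) (maxCorr ν₂ Prod.fst Prod.snd) :=
    le_trans hRn1 (le_max_left _ _)
  -- marginal functions
  set φ : α₁ → ℝ := fun x => ∫ q, f (x, q.1) ∂ν₂ with hφdef
  set ψ : β₁ → ℝ := fun y => ∫ q, g (y, q.2) ∂ν₂ with hψdef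
  set sf : α₁ → ℝ := fun x => ∫ q, f (x, q.1) ^ 2 ∂ν₂ with hsfdef
  set sg : β₁ → ℝ := fun y => ∫ q, g (y, q.2) ^ 2 ∂ν₂ with hsgdef
  have hφm : Measurable φ := by
    rw [hφdef]
    exact (StronglyMeasurable.integral_prod_right' (ν := ν₂)
      (f := fun z : α₁ × (α₂ × β₂) => f (z.1, z.2.1))
      (by fun_prop : Measurable fun z : α₁ × (α₂ × β₂) => f (z.1, z.2.1)).stronglyMeasurable).measurable
  have hψm : Measurable ψ := by
    rw [hψdef]
    exact (StronglyMeasurable.integral_prod_right' (ν := ν₂)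
      (f := fun z : β₁ × (α₂ × β₂) => g (z.1, z.2.2))
      (by fun_prop : Measurable fun z : β₁ × (α₂ × β₂) => g (z.1, z.2.2)).stronglyMeasurable).measurable
  have hsfm : Measurable sf := by
    rw [hsfdef]
    exact (StronglyMeasurable.integral_prod_right' (ν := ν₂)
      (f := fun z : α₁ × (α₂ × β₂) => f (z.1, z.2.1) ^ 2)
      (by fun_prop : Measurable fun z : α₁ × (α₂ × β₂) => f (z.1, z.2.1) ^ 2).stronglyMeasurable).measurable
  have hsgm : Measurable sg := by
    rw [hsgdef]
    exact (StronglyMeasurable.integral_prod_right' (ν := ν₂)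
      (f := fun z : β₁ × (α₂ × β₂) => g (z.1, z.2.2) ^ 2)
      (by fun_prop : Measurable fun z : β₁ × (α₂ × β₂) => g (z.1, z.2.2) ^ 2).stronglyMeasurable).measurable
  -- global integrabilities
  have iF : Integrable (fun p : (α₁ × β₁) × (α₂ × β₂) => f (p.1.1, p.2.1)) (ν₁.prod ν₂) :=
    hF.integrable one_le_two
  have iG : Integrable (fun p : (α₁ × β₁) × (α₂ × β₂) => g (p.1.2, p.2.2)) (ν₁.prod ν₂) :=
    hG.integrable one_le_two
  have iF2 : Integrable (fun p : (α₁ × β₁) × (α₂ × β₂) => f (p.1.1, p.2.1) ^ 2) (ν₁.prod ν₂) :=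
    hF.integrable_sq
  have iG2 : Integrable (fun p : (α₁ × β₁) × (α₂ × β₂) => g (p.1.2, p.2.2) ^ 2) (ν₁.prod ν₂) :=
    hG.integrable_sq
  have iFG : Integrable (fun p : (α₁ × β₁) × (α₂ × β₂) =>
      f (p.1.1, p.2.1) * g (p.1.2, p.2.2)) (ν₁.prod ν₂) := integrable_mul₂ hF hG
  -- Fubini marginal facts
  have hsf_int : Integrable (fun p₁ : α₁ × β₁ => sf p₁.1) ν₁ := by
    simp only [hsfdef]
    exact iF2.integral_prod_left
  have hsg_int : Integrable (fun p₁ : α₁ × β₁ => sg p₁.2) ν₁ := by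
    simp only [hsgdef]
    exact iG2.integral_prod_left
  have hsf_eq : ∫ p₁, sf p₁.1 ∂ν₁ = ∫ p, f (p.1.1, p.2.1) ^ 2 ∂(ν₁.prod ν₂) := by
    rw [integral_prod _ iF2]
  have hsg_eq : ∫ p₁, sg p₁.2 ∂ν₁ = ∫ p, g (p.1.2, p.2.2) ^ 2 ∂(ν₁.prod ν₂) := by
    rw [integral_prod _ iG2]
  have hφ_mean : (∫ p₁, φ p₁.1 ∂ν₁) = 0 := by
    rw [← hFm, integral_prod _ iF]
  have hψ_mean : (∫ p₁, ψ p₁.2 ∂ν₁) = 0 := by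
    rw [← hGm, integral_prod _ iG]
  -- a.e. section facts
  have haef : ∀ᵐ p₁ ∂ν₁, MemLp (fun q : α₂ × β₂ => f (p₁.1, q.1)) 2 ν₂ := by
    filter_upwards [iF2.prod_right_ae] with p₁ h
    exact (memLp_two_iff_integrable_sq
      (by fun_prop : Measurable fun q : α₂ × β₂ => f (p₁.1, q.1)).aestronglyMeasurable).2 h
  have haeg : ∀ᵐ p₁ ∂ν₁, MemLp (fun q : α₂ × β₂ => g (p₁.2, q.2)) 2 ν₂ := by
    filter_upwards [iG2.prod_right_ae] with p₁ h
    exact (memLp_two_iff_integrable_sq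
      (by fun_prop : Measurable fun q : α₂ × β₂ => g (p₁.2, q.2)).aestronglyMeasurable).2 h
  have hφsq : ∀ᵐ p₁ ∂ν₁, (φ p₁.1) ^ 2 ≤ sf p₁.1 := by
    filter_upwards [haef] with p₁ h
    simpa only [hφdef, hsfdef] using sq_integral_le h
  have hψsq : ∀ᵐ p₁ ∂ν₁, (ψ p₁.2) ^ 2 ≤ sg p₁.2 := by
    filter_upwards [haeg] with p₁ h
    simpa only [hψdef, hsgdef] using sq_integral_le h
  -- L² bounds for φ, ψ
  have hφL2 : MemLp (fun p₁ : α₁ × β₁ => φ p₁.1) 2 ν₁ := by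
    refine (memLp_two_iff_integrable_sq
      ((hφm.comp measurable_fst)).aestronglyMeasurable).2 ?_
    refine hsf_int.mono' ((hφm.comp measurable_fst).pow_const 2).aestronglyMeasurable ?_
    filter_upwards [hφsq] with p₁ h
    rw [Real.norm_eq_abs, abs_of_nonneg (sq_nonneg _)]
    exact h
  have hψL2 : MemLp (fun p₁ : α₁ × β₁ => ψ p₁.2) 2 ν₁ := by
    refine (memLp_two_iff_integrable_sq
      ((hψm.comp measurable_snd)).aestronglyMeasurable).2 ?_
    refine hsg_int.mono' ((hψm.comp measurable_snd).pow_const 2).aestronglyMeasurable ?_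
    filter_upwards [hψsq] with p₁ h
    rw [Real.norm_eq_abs, abs_of_nonneg (sq_nonneg _)]
    exact h
  -- conditional standard deviations
  set σ : α₁ → ℝ := fun x => Real.sqrt (sf x - (φ x) ^ 2) with hσdef
  set τ : β₁ → ℝ := fun y => Real.sqrt (sg y - (ψ y) ^ 2) with hτdef
  have hσm : Measurable σ := by
    simp only [hσdef]
    exact (hsfm.sub (hφm.pow_const 2)).sqrt
  have hτm : Measurable τ := by
    simp only [hτdef]
    exact (hsgm.sub (hψm.pow_const 2)).sqrt
  have hsf_nonneg : ∀ x, 0 ≤ sf x := fun x => by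
    simp only [hsfdef]
    exact integral_nonneg fun q => sq_nonneg _
  have hsg_nonneg : ∀ y, 0 ≤ sg y := fun y => by
    simp only [hsgdef]
    exact integral_nonneg fun q => sq_nonneg _
  have hσ_sq_le : ∀ x, σ x ^ 2 ≤ sf x := fun x => by
    simp only [hσdef]
    rcases le_or_gt 0 (sf x - (φ x) ^ 2) with h | h
    · rw [Real.sq_sqrt h]
      nlinarith [sq_nonneg (φ x)]
    · rw [Real.sqrt_eq_zero'.2 h.le]
      simpa using hsf_nonneg x
  have hτ_sq_le : ∀ y, τ y ^ 2 ≤ sg y := fun y => by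
    simp only [hτdef]
    rcases le_or_gt 0 (sg y - (ψ y) ^ 2) with h | h
    · rw [Real.sq_sqrt h]
      nlinarith [sq_nonneg (ψ y)]
    · rw [Real.sqrt_eq_zero'.2 h.le]
      simpa using hsg_nonneg y
  have hσL2 : MemLp (fun p₁ : α₁ × β₁ => σ p₁.1) 2 ν₁ := by
    refine (memLp_two_iff_integrable_sq
      ((hσm.comp measurable_fst)).aestronglyMeasurable).2 ?_
    refine hsf_int.mono' ((hσm.comp measurable_fst).pow_const 2).aestronglyMeasurable ?_
    refine Filter.Eventually.of_forall fun p₁ => ?_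
    rw [Real.norm_eq_abs, abs_of_nonneg (sq_nonneg _)]
    exact hσ_sq_le _
  have hτL2 : MemLp (fun p₁ : α₁ × β₁ => τ p₁.2) 2 ν₁ := by
    refine (memLp_two_iff_integrable_sq
      ((hτm.comp measurable_snd)).aestronglyMeasurable).2 ?_
    refine hsg_int.mono' ((hτm.comp measurable_snd).pow_const 2).aestronglyMeasurable ?_
    refine Filter.Eventually.of_forall fun p₁ => ?_
    rw [Real.norm_eq_abs, abs_of_nonneg (sq_nonneg _)]
    exact hτ_sq_le _
  -- pointwise conditional covariance bound
  have key_ae : ∀ᵐ p₁ ∂ν₁,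
      (∫ q, f (p₁.1, q.1) * g (p₁.2, q.2) ∂ν₂) - φ p₁.1 * ψ p₁.2 ≤
        maxCorr ν₂ Prod.fst Prod.snd * (σ p₁.1 * τ p₁.2) := by
    filter_upwards [haef, haeg] with p₁ hfe hge
    have hu : Measurable (fun a : α₂ => f (p₁.1, a) - φ p₁.1) := by fun_prop
    have hv : Measurable (fun b : β₂ => g (p₁.2, b) - ψ p₁.2) := by fun_prop
    have hu2 : MemLp (fun q : α₂ × β₂ => f (p₁.1, q.1) - φ p₁.1) 2 ν₂ :=
      hfe.sub (memLp_const _)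
    have hv2 : MemLp (fun q : α₂ × β₂ => g (p₁.2, q.2) - ψ p₁.2) 2 ν₂ :=
      hge.sub (memLp_const _)
    have hum : (∫ q : α₂ × β₂, (f (p₁.1, q.1) - φ p₁.1) ∂ν₂) = 0 := by
      rw [integral_sub (hfe.integrable one_le_two) (integrable_const _), integral_const]
      simp only [hφdef, measure_univ, ENNReal.toReal_one, smul_eq_mul, one_mul, probReal_univ]
      exact sub_self _
    have hvm : (∫ q : α₂ × β₂, (g (p₁.2, q.2) - ψ p₁.2) ∂ν₂) = 0 := by
      rw [integral_sub (hge.integrable one_le_two) (integrable_const _), integral_const]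
      simp only [hψdef, measure_univ, ENNReal.toReal_one, smul_eq_mul, one_mul, probReal_univ]
      exact sub_self _
    have h := cov_pair_le ν₂ (u := fun a : α₂ => f (p₁.1, a) - φ p₁.1)
      (v := fun b : β₂ => g (p₁.2, b) - ψ p₁.2) hu hv hu2 hv2 hum hvm
    have e1 : (∫ q : α₂ × β₂, (f (p₁.1, q.1) - φ p₁.1) * (g (p₁.2, q.2) - ψ p₁.2) ∂ν₂)
        = (∫ q, f (p₁.1, q.1) * g (p₁.2, q.2) ∂ν₂) - φ p₁.1 * ψ p₁.2 := by
      simpa only [hφdef, hψdef] using center_mul hfe hge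
    have e2 : (∫ q : α₂ × β₂, (f (p₁.1, q.1) - φ p₁.1) ^ 2 ∂ν₂) = sf p₁.1 - (φ p₁.1) ^ 2 := by
      simpa only [hφdef, hsfdef] using center_sq hfe
    have e3 : (∫ q : α₂ × β₂, (g (p₁.2, q.2) - ψ p₁.2) ^ 2 ∂ν₂) = sg p₁.2 - (ψ p₁.2) ^ 2 := by
      simpa only [hψdef, hsgdef] using center_sq hge
    rw [e1, e2, e3] at h
    simpa only [hσdef, hτdef] using h
  -- splitting the covariance
  have hinner_int : Integrable
      (fun p₁ : α₁ × β₁ => ∫ q, f (p₁.1, q.1) * g (p₁.2, q.2) ∂ν₂) ν₁ :=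
    iFG.integral_prod_left
  have hφψ_int : Integrable (fun p₁ : α₁ × β₁ => φ p₁.1 * ψ p₁.2) ν₁ :=
    integrable_mul₂ hφL2 hψL2
  have hc_int : Integrable (fun p₁ : α₁ × β₁ =>
      (∫ q, f (p₁.1, q.1) * g (p₁.2, q.2) ∂ν₂) - φ p₁.1 * ψ p₁.2) ν₁ :=
    hinner_int.sub hφψ_int
  have hsplit : ∫ p, f (p.1.1, p.2.1) * g (p.1.2, p.2.2) ∂(ν₁.prod ν₂)
      = (∫ p₁, ((∫ q, f (p₁.1, q.1) * g (p₁.2, q.2) ∂ν₂) - φ p₁.1 * ψ p₁.2) ∂ν₁)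
        + ∫ p₁, φ p₁.1 * ψ p₁.2 ∂ν₁ := by
    rw [integral_prod _ iFG, ← integral_add hc_int hφψ_int]
    exact integral_congr_ae (Filter.Eventually.of_forall fun p₁ => by ring)
  -- step C
  have hC : ∫ p₁, φ p₁.1 * ψ p₁.2 ∂ν₁ ≤ maxCorr ν₁ Prod.fst Prod.snd *
      (Real.sqrt (∫ p₁, (φ p₁.1) ^ 2 ∂ν₁) * Real.sqrt (∫ p₁, (ψ p₁.2) ^ 2 ∂ν₁)) :=
    cov_pair_le ν₁ hφm hψm hφL2 hψL2 hφ_mean hψ_mean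
  -- step E
  have hE : (∫ p₁, ((∫ q, f (p₁.1, q.1) * g (p₁.2, q.2) ∂ν₂) - φ p₁.1 * ψ p₁.2) ∂ν₁)
      ≤ maxCorr ν₂ Prod.fst Prod.snd * ∫ p₁, σ p₁.1 * τ p₁.2 ∂ν₁ := by
    have h := integral_mono_ae hc_int
      ((integrable_mul₂ hσL2 hτL2).const_mul (maxCorr ν₂ Prod.fst Prod.snd)) key_ae
    rwa [integral_const_mul] at h
  -- step F
  have hFcs : ∫ p₁, σ p₁.1 * τ p₁.2 ∂ν₁ ≤
      Real.sqrt (∫ p₁, (σ p₁.1) ^ 2 ∂ν₁) * Real.sqrt (∫ p₁, (τ p₁.2) ^ 2 ∂ν₁) :=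
    le_trans (le_abs_self _) (abs_integral_mul_le hσL2 hτL2)
  -- step G
  have hσae : ∀ᵐ p₁ ∂ν₁, (σ p₁.1) ^ 2 = sf p₁.1 - (φ p₁.1) ^ 2 := by
    filter_upwards [hφsq] with p₁ h
    simp only [hσdef]
    exact Real.sq_sqrt (by linarith)
  have hτae : ∀ᵐ p₁ ∂ν₁, (τ p₁.2) ^ 2 = sg p₁.2 - (ψ p₁.2) ^ 2 := by
    filter_upwards [hψsq] with p₁ h
    simp only [hτdef]
    exact Real.sq_sqrt (by linarith)
  have hG1 : ∫ p₁, (σ p₁.1) ^ 2 ∂ν₁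
      = (∫ p, f (p.1.1, p.2.1) ^ 2 ∂(ν₁.prod ν₂)) - ∫ p₁, (φ p₁.1) ^ 2 ∂ν₁ := by
    rw [integral_congr_ae hσae, integral_sub hsf_int hφL2.integrable_sq, hsf_eq]
  have hG2 : ∫ p₁, (τ p₁.2) ^ 2 ∂ν₁
      = (∫ p, g (p.1.2, p.2.2) ^ 2 ∂(ν₁.prod ν₂)) - ∫ p₁, (ψ p₁.2) ^ 2 ∂ν₁ := by
    rw [integral_congr_ae hτae, integral_sub hsg_int hψL2.integrable_sq, hsg_eq]
  -- final numeric assembly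
  have hPφ0 : 0 ≤ ∫ p₁, (φ p₁.1) ^ 2 ∂ν₁ := integral_nonneg fun _ => sq_nonneg _
  have hQψ0 : 0 ≤ ∫ p₁, (ψ p₁.2) ^ 2 ∂ν₁ := integral_nonneg fun _ => sq_nonneg _
  have hσ20 : 0 ≤ ∫ p₁, (σ p₁.1) ^ 2 ∂ν₁ := integral_nonneg fun _ => sq_nonneg _
  have hτ20 : 0 ≤ ∫ p₁, (τ p₁.2) ^ 2 ∂ν₁ := integral_nonneg fun _ => sq_nonneg _
  have hsub1 : 0 ≤ (∫ p, f (p.1.1, p.2.1) ^ 2 ∂(ν₁.prod ν₂)) - ∫ p₁, (φ p₁.1) ^ 2 ∂ν₁ := by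
    rw [← hG1]; exact hσ20
  have hsub2 : 0 ≤ (∫ p, g (p.1.2, p.2.2) ^ 2 ∂(ν₁.prod ν₂)) - ∫ p₁, (ψ p₁.2) ^ 2 ∂ν₁ := by
    rw [← hG2]; exact hτ20
  calc ∫ p, f (p.1.1, p.2.1) * g (p.1.2, p.2.2) ∂(ν₁.prod ν₂)
      = (∫ p₁, ((∫ q, f (p₁.1, q.1) * g (p₁.2, q.2) ∂ν₂) - φ p₁.1 * ψ p₁.2) ∂ν₁)
        + ∫ p₁, φ p₁.1 * ψ p₁.2 ∂ν₁ := hsplit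
    _ ≤ (maxCorr ν₂ Prod.fst Prod.snd * ∫ p₁, σ p₁.1 * τ p₁.2 ∂ν₁)
        + maxCorr ν₁ Prod.fst Prod.snd *
          (Real.sqrt (∫ p₁, (φ p₁.1) ^ 2 ∂ν₁) * Real.sqrt (∫ p₁, (ψ p₁.2) ^ 2 ∂ν₁)) :=
        add_le_add hE hC
    _ ≤ (maxCorr ν₂ Prod.fst Prod.snd *
          (Real.sqrt (∫ p₁, (σ p₁.1) ^ 2 ∂ν₁) * Real.sqrt (∫ p₁, (τ p₁.2) ^ 2 ∂ν₁)))
        + maxCorr ν₁ Prod.fst Prod.snd *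
          (Real.sqrt (∫ p₁, (φ p₁.1) ^ 2 ∂ν₁) * Real.sqrt (∫ p₁, (ψ p₁.2) ^ 2 ∂ν₁)) :=
        add_le_add_left (mul_le_mul_of_nonneg_left hFcs hRn2) _
    _ = (maxCorr ν₂ Prod.fst Prod.snd *
          (Real.sqrt ((∫ p, f (p.1.1, p.2.1) ^ 2 ∂(ν₁.prod ν₂)) - ∫ p₁, (φ p₁.1) ^ 2 ∂ν₁) *
           Real.sqrt ((∫ p, g (p.1.2, p.2.2) ^ 2 ∂(ν₁.prod ν₂)) - ∫ p₁, (ψ p₁.2) ^ 2 ∂ν₁)))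
        + maxCorr ν₁ Prod.fst Prod.snd *
          (Real.sqrt (∫ p₁, (φ p₁.1) ^ 2 ∂ν₁) * Real.sqrt (∫ p₁, (ψ p₁.2) ^ 2 ∂ν₁)) := by
        rw [hG1, hG2]
    _ ≤ max (maxCorr ν₁ Prod.fst Prod.snd) (maxCorr ν₂ Prod.fst Prod.snd) *
          (Real.sqrt ((∫ p, f (p.1.1, p.2.1) ^ 2 ∂(ν₁.prod ν₂)) - ∫ p₁, (φ p₁.1) ^ 2 ∂ν₁) *
           Real.sqrt ((∫ p, g (p.1.2, p.2.2) ^ 2 ∂(ν₁.prod ν₂)) - ∫ p₁, (ψ p₁.2) ^ 2 ∂ν₁))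
        + max (maxCorr ν₁ Prod.fst Prod.snd) (maxCorr ν₂ Prod.fst Prod.snd) *
          (Real.sqrt (∫ p₁, (φ p₁.1) ^ 2 ∂ν₁) * Real.sqrt (∫ p₁, (ψ p₁.2) ^ 2 ∂ν₁)) := by
        refine add_le_add
          (mul_le_mul_of_nonneg_right (le_max_right _ _)
            (mul_nonneg (Real.sqrt_nonneg _) (Real.sqrt_nonneg _)))
          (mul_le_mul_of_nonneg_right (le_max_left _ _)
            (mul_nonneg (Real.sqrt_nonneg _) (Real.sqrt_nonneg _)))
    _ ≤ max (maxCorr ν₁ Prod.fst Prod.snd) (maxCorr ν₂ Prod.fst Prod.snd) *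
          (Real.sqrt (∫ p, f (p.1.1, p.2.1) ^ 2 ∂(ν₁.prod ν₂)) *
           Real.sqrt (∫ p, g (p.1.2, p.2.2) ^ 2 ∂(ν₁.prod ν₂))) := by
        rw [← mul_add]
        refine mul_le_mul_of_nonneg_left ?_ hM0
        have h := sqrt_cs hPφ0 hsub1 hQψ0 hsub2
        rw [show (∫ p₁, (φ p₁.1) ^ 2 ∂ν₁) +
              ((∫ p, f (p.1.1, p.2.1) ^ 2 ∂(ν₁.prod ν₂)) - ∫ p₁, (φ p₁.1) ^ 2 ∂ν₁)
            = ∫ p, f (p.1.1, p.2.1) ^ 2 ∂(ν₁.prod ν₂) from by ring,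
          show (∫ p₁, (ψ p₁.2) ^ 2 ∂ν₁) +
              ((∫ p, g (p.1.2, p.2.2) ^ 2 ∂(ν₁.prod ν₂)) - ∫ p₁, (ψ p₁.2) ^ 2 ∂ν₁)
            = ∫ p, g (p.1.2, p.2.2) ^ 2 ∂(ν₁.prod ν₂) from by ring] at h
        linarith [h]

end CF
end Chunk5
section Chunk6
open MeasureTheory ProbabilityTheory Real
namespace CF

variable {α₁ β₁ α₂ β₂ : Type*} [MeasurableSpace α₁] [MeasurableSpace β₁]
  [MeasurableSpace α₂] [MeasurableSpace β₂]
  {ν₁ : Measure (α₁ × β₁)} {ν₂ : Measure (α₂ × β₂)}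

lemma maxCorr_le_of_subset {Ω Ω' : Type*} [MeasurableSpace Ω] [MeasurableSpace Ω']
    {μ : Measure Ω} {ν : Measure Ω'}
    {α β α' β' : Type*} [MeasurableSpace α] [MeasurableSpace β]
    [MeasurableSpace α'] [MeasurableSpace β']
    {A : Ω' → α'} {B : Ω' → β'} {X : Ω → α} {Y : Ω → β} [IsProbabilityMeasure μ]
    (h : mcSet ν A B ⊆ mcSet μ X Y) : maxCorr ν A B ≤ maxCorr μ X Y := by
  rcases (mcSet ν A B).eq_empty_or_nonempty with he | hne
  · rw [maxCorr_def, he, Real.sSup_empty]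
    exact maxCorr_nonneg
  · rw [maxCorr_def, maxCorr_def]
    exact csSup_le_csSup mcSet_bddAbove hne h

lemma core [IsProbabilityMeasure ν₁] [IsProbabilityMeasure ν₂] {r : ℝ}
    (hr : r ∈ mcSet (ν₁.prod ν₂) (fun p : (α₁ × β₁) × (α₂ × β₂) => (p.1.1, p.2.1))
      (fun p : (α₁ × β₁) × (α₂ × β₂) => (p.1.2, p.2.2))) :
    r ≤ max (maxCorr ν₁ Prod.fst Prod.snd) (maxCorr ν₂ Prod.fst Prod.snd) := by
  obtain ⟨f, g, hf, hg, hF, hG, hvF, hvG, hre⟩ := hr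
  have iF : Integrable (fun p : (α₁ × β₁) × (α₂ × β₂) => f (p.1.1, p.2.1)) (ν₁.prod ν₂) :=
    hF.integrable one_le_two
  have iG : Integrable (fun p : (α₁ × β₁) × (α₂ × β₂) => g (p.1.2, p.2.2)) (ν₁.prod ν₂) :=
    hG.integrable one_le_two
  have hm2 : MemLp (fun p : (α₁ × β₁) × (α₂ × β₂) => f (p.1.1, p.2.1) -
      (∫ p', f (p'.1.1, p'.2.1) ∂(ν₁.prod ν₂))) 2 (ν₁.prod ν₂) := hF.sub (memLp_const _)
  have hn2 : MemLp (fun p : (α₁ × β₁) × (α₂ × β₂) => g (p.1.2, p.2.2) -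
      (∫ p', g (p'.1.2, p'.2.2) ∂(ν₁.prod ν₂))) 2 (ν₁.prod ν₂) := hG.sub (memLp_const _)
  have hm0 : (∫ p, (f (p.1.1, p.2.1) - ∫ p', f (p'.1.1, p'.2.1) ∂(ν₁.prod ν₂))
      ∂(ν₁.prod ν₂)) = 0 := by
    rw [integral_sub iF (integrable_const _), integral_const]
    simp
  have hn0 : (∫ p, (g (p.1.2, p.2.2) - ∫ p', g (p'.1.2, p'.2.2) ∂(ν₁.prod ν₂))
      ∂(ν₁.prod ν₂)) = 0 := by
    rw [integral_sub iG (integrable_const _), integral_const]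
    simp
  have hcore := core0 (ν₁ := ν₁) (ν₂ := ν₂)
    (f := fun a => f a - ∫ p', f (p'.1.1, p'.2.1) ∂(ν₁.prod ν₂))
    (g := fun b => g b - ∫ p', g (p'.1.2, p'.2.2) ∂(ν₁.prod ν₂))
    (hf.sub measurable_const) (hg.sub measurable_const) hm2 hn2 hm0 hn0
  have hvF' : 0 < variance (f ∘ fun p : (α₁ × β₁) × (α₂ × β₂) => (p.1.1, p.2.1)) (ν₁.prod ν₂) :=
    lt_of_le_of_ne (variance_nonneg _ _) (Ne.symm hvF)
  have hvG' : 0 < variance (g ∘ fun p : (α₁ × β₁) × (α₂ × β₂) => (p.1.2, p.2.2)) (ν₁.prod ν₂) :=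
    lt_of_le_of_ne (variance_nonneg _ _) (Ne.symm hvG)
  have hpos : 0 < Real.sqrt (variance (f ∘ fun p : (α₁ × β₁) × (α₂ × β₂) =>
        (p.1.1, p.2.1)) (ν₁.prod ν₂)) *
      Real.sqrt (variance (g ∘ fun p : (α₁ × β₁) × (α₂ × β₂) => (p.1.2, p.2.2)) (ν₁.prod ν₂)) :=
    mul_pos (Real.sqrt_pos.2 hvF') (Real.sqrt_pos.2 hvG')
  rw [hre, pearson, div_le_iff₀ hpos, variance_eq_integral_sq hF, variance_eq_integral_sq hG]
  exact hcore

lemma key {α₁ β₁ α₂ β₂ : Type*} [MeasurableSpace α₁] [MeasurableSpace β₁]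
    [MeasurableSpace α₂] [MeasurableSpace β₂]
    (ν₁ : Measure (α₁ × β₁)) (ν₂ : Measure (α₂ × β₂))
    [IsProbabilityMeasure ν₁] [IsProbabilityMeasure ν₂] :
    maxCorr (ν₁.prod ν₂) (fun p => (p.1.1, p.2.1)) (fun p => (p.1.2, p.2.2)) =
      max (maxCorr ν₁ Prod.fst Prod.snd) (maxCorr ν₂ Prod.fst Prod.snd) := by
  refine le_antisymm ?_ (max_le ?_ ?_)
  · rw [maxCorr_def]
    refine Real.sSup_le (fun r hr => core hr)
      (le_trans (maxCorr_nonneg (μ := ν₁) (X := (Prod.fst : α₁ × β₁ → α₁))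
        (Y := (Prod.snd : α₁ × β₁ → β₁))) (le_max_left _ _))
  · refine maxCorr_le_of_subset ?_
    intro r hr
    have h1 : mcSet ν₁ (Prod.fst : α₁ × β₁ → α₁) Prod.snd =
        mcSet ((ν₁.prod ν₂).map Prod.fst) Prod.fst Prod.snd := by
      rw [show ((ν₁.prod ν₂).map Prod.fst) = ν₁ from Measure.fst_prod]
    rw [h1, ← mcSet_comp_eq measurable_fst measurable_fst measurable_snd] at hr
    exact mcSet_comp_subset (A := (Prod.fst : α₁ × α₂ → α₁)) (B := (Prod.fst : β₁ × β₂ → β₁))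
      measurable_fst measurable_fst _ _ hr
  · refine maxCorr_le_of_subset ?_
    intro r hr
    have h1 : mcSet ν₂ (Prod.fst : α₂ × β₂ → α₂) Prod.snd =
        mcSet ((ν₁.prod ν₂).map Prod.snd) Prod.fst Prod.snd := by
      rw [show ((ν₁.prod ν₂).map Prod.snd) = ν₂ from Measure.snd_prod]
    rw [h1, ← mcSet_comp_eq measurable_snd measurable_fst measurable_snd] at hr
    exact mcSet_comp_subset (A := (Prod.snd : α₁ × α₂ → α₂)) (B := (Prod.snd : β₁ × β₂ → β₂))
      measurable_snd measurable_snd _ _ hr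

end CF
end Chunk6

open CF in
/-- Csáki–Fischer identity: if `(X₁,Y₁)` and `(X₂,Y₂)` are independent, then the maximal
correlation of the pairs is the maximum of the maximal correlations. -/
theorem csaki_fischer {Ω α₁ β₁ α₂ β₂ : Type*} [MeasurableSpace Ω]
    [MeasurableSpace α₁] [MeasurableSpace β₁] [MeasurableSpace α₂] [MeasurableSpace β₂]
    (μ : Measure Ω) [IsProbabilityMeasure μ]
    (X₁ : Ω → α₁) (Y₁ : Ω → β₁) (X₂ : Ω → α₂) (Y₂ : Ω → β₂)
    (hX₁ : Measurable X₁) (hY₁ : Measurable Y₁) (hX₂ : Measurable X₂) (hY₂ : Measurable Y₂)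
    (hindep : IndepFun (fun ω => (X₁ ω, Y₁ ω)) (fun ω => (X₂ ω, Y₂ ω)) μ) :
    maxCorr μ (fun ω => (X₁ ω, X₂ ω)) (fun ω => (Y₁ ω, Y₂ ω)) =
      max (maxCorr μ X₁ Y₁) (maxCorr μ X₂ Y₂) := by
  have hT : Measurable (fun ω => ((X₁ ω, Y₁ ω), (X₂ ω, Y₂ ω))) :=
    (hX₁.prodMk hY₁).prodMk (hX₂.prodMk hY₂)
  have hR : Measurable (fun p : (α₁ × β₁) × (α₂ × β₂) => ((p.1.1, p.2.1), (p.1.2, p.2.2))) := by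
    fun_prop
  have hbig : Measurable (fun ω => ((X₁ ω, X₂ ω), (Y₁ ω, Y₂ ω))) :=
    (hX₁.prodMk hX₂).prodMk (hY₁.prodMk hY₂)
  have ν₁ : Measure (α₁ × β₁) := μ.map (fun ω => (X₁ ω, Y₁ ω))
  clear ν₁
  haveI i1 : IsProbabilityMeasure (μ.map (fun ω => (X₁ ω, Y₁ ω))) :=
    Measure.isProbabilityMeasure_map (hX₁.prodMk hY₁).aemeasurable
  haveI i2 : IsProbabilityMeasure (μ.map (fun ω => (X₂ ω, Y₂ ω))) :=
    Measure.isProbabilityMeasure_map (hX₂.prodMk hY₂).aemeasurable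
  have hprod : μ.map (fun ω => ((X₁ ω, Y₁ ω), (X₂ ω, Y₂ ω))) =
      (μ.map (fun ω => (X₁ ω, Y₁ ω))).prod (μ.map (fun ω => (X₂ ω, Y₂ ω))) :=
    (indepFun_iff_map_prod_eq_prod_map_map (hX₁.prodMk hY₁).aemeasurable
      (hX₂.prodMk hY₂).aemeasurable).1 hindep
  have h1 : mcSet μ (fun ω => (X₁ ω, X₂ ω)) (fun ω => (Y₁ ω, Y₂ ω)) =
      mcSet (μ.map (fun ω => ((X₁ ω, X₂ ω), (Y₁ ω, Y₂ ω)))) Prod.fst Prod.snd :=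
    mcSet_comp_eq hbig measurable_fst measurable_snd
  have h2 : μ.map (fun ω => ((X₁ ω, X₂ ω), (Y₁ ω, Y₂ ω))) =
      ((μ.map (fun ω => (X₁ ω, Y₁ ω))).prod (μ.map (fun ω => (X₂ ω, Y₂ ω)))).map
        (fun p : (α₁ × β₁) × (α₂ × β₂) => ((p.1.1, p.2.1), (p.1.2, p.2.2))) := by
    rw [← hprod]
    exact (Measure.map_map hR hT).symm
  have h3 : mcSet (((μ.map (fun ω => (X₁ ω, Y₁ ω))).prod (μ.map (fun ω => (X₂ ω, Y₂ ω)))).map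
        (fun p : (α₁ × β₁) × (α₂ × β₂) => ((p.1.1, p.2.1), (p.1.2, p.2.2)))) Prod.fst Prod.snd =
      mcSet ((μ.map (fun ω => (X₁ ω, Y₁ ω))).prod (μ.map (fun ω => (X₂ ω, Y₂ ω))))
        (fun p => (p.1.1, p.2.1)) (fun p => (p.1.2, p.2.2)) :=
    (mcSet_comp_eq hR measurable_fst measurable_snd).symm
  have e0 : maxCorr μ (fun ω => (X₁ ω, X₂ ω)) (fun ω => (Y₁ ω, Y₂ ω)) =
      maxCorr ((μ.map (fun ω => (X₁ ω, Y₁ ω))).prod (μ.map (fun ω => (X₂ ω, Y₂ ω))))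
        (fun p => (p.1.1, p.2.1)) (fun p => (p.1.2, p.2.2)) := by
    rw [maxCorr_def, maxCorr_def, h1, h2, h3]
  have e1 : maxCorr μ X₁ Y₁ = maxCorr (μ.map (fun ω => (X₁ ω, Y₁ ω))) Prod.fst Prod.snd :=
    congrArg sSup (mcSet_comp_eq (hX₁.prodMk hY₁) measurable_fst measurable_snd)
  have e2 : maxCorr μ X₂ Y₂ = maxCorr (μ.map (fun ω => (X₂ ω, Y₂ ω))) Prod.fst Prod.snd :=
    congrArg sSup (mcSet_comp_eq (hX₂.prodMk hY₂) measurable_fst measurable_snd)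
  rw [e0, e1, e2]
  exact key _ _
end

section
/- Let T be a uniformly random subset of [n] of size n−1, and given T let S be a uniformly random subset of T of size k. Then R(S,T) = √(k/((n−1)(n−k))). -/
open MeasureTheory ProbabilityTheory Real

instance finsetMeasurableSpace {n : ℕ} : MeasurableSpace (Finset (Fin n)) := ⊤

section Aux
open Finset
variable {n : ℕ}


lemma sum_to_ite {β : Type*} [Fintype β] [DecidableEq β] (t : Finset β) (F : β → ℝ) :
    ∑ i ∈ t, F i = ∑ i, if i ∈ t then F i else 0 := by
  rw [Finset.sum_ite_mem, Finset.univ_inter]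

lemma card_filter_notmem (k : ℕ) (i : Fin n) :
    ((Finset.powersetCard k (Finset.univ : Finset (Fin n))).filter (fun s => i ∈ sᶜ)).card
      = (n-1).choose k := by
  have h : (Finset.powersetCard k (Finset.univ : Finset (Fin n))).filter (fun s => i ∈ sᶜ)
      = Finset.powersetCard k (Finset.univ.erase i) := by
    ext s
    simp only [Finset.mem_filter, Finset.mem_powersetCard, Finset.subset_erase,
      Finset.subset_univ, true_and, and_true, Finset.mem_compl]
    tauto
  rw [h, Finset.card_powersetCard, Finset.card_erase_of_mem (Finset.mem_univ i),
    Finset.card_univ, Fintype.card_fin]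

lemma card_filter_notmem2 (k : ℕ) {i j : Fin n} (hij : i ≠ j) :
    ((Finset.powersetCard k (Finset.univ : Finset (Fin n))).filter
      (fun s => i ∈ sᶜ ∧ j ∈ sᶜ)).card = (n-2).choose k := by
  have h1 : (Finset.powersetCard k (Finset.univ : Finset (Fin n))).filter
      (fun s => i ∈ sᶜ ∧ j ∈ sᶜ) = Finset.powersetCard k ((Finset.univ.erase i).erase j) := by
    ext s
    simp only [Finset.mem_filter, Finset.mem_powersetCard, Finset.subset_erase,
      Finset.subset_univ, true_and, and_true, Finset.mem_compl]
    tauto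
  rw [h1, Finset.card_powersetCard, Finset.card_erase_of_mem
    (Finset.mem_erase.2 ⟨hij.symm, Finset.mem_univ j⟩),
    Finset.card_erase_of_mem (Finset.mem_univ i), Finset.card_univ, Fintype.card_fin]
  congr 1

lemma sum_compl_swap (k : ℕ) (H : Fin n → ℝ) :
    ∑ s ∈ Finset.powersetCard k (Finset.univ : Finset (Fin n)), ∑ i ∈ sᶜ, H i
      = ((n-1).choose k : ℝ) * ∑ i, H i := by
  simp_rw [fun s : Finset (Fin n) => sum_to_ite sᶜ H]
  rw [Finset.sum_comm]
  have h2 : ∀ i : Fin n, ∑ s ∈ Finset.powersetCard k (Finset.univ : Finset (Fin n)),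
      (if i ∈ sᶜ then H i else 0) = ((n-1).choose k : ℝ) * H i := by
    intro i
    rw [Finset.sum_ite, Finset.sum_const_zero, add_zero, Finset.sum_const, card_filter_notmem,
      nsmul_eq_mul]
  simp_rw [h2]
  rw [← Finset.mul_sum]

lemma sum_compl_sq (hn : 2 ≤ n) {k : ℕ} (hk : 1 ≤ k) (hkn : k ≤ n - 1) (H : Fin n → ℝ)
    (h0 : ∑ i, H i = 0) :
    ∑ s ∈ Finset.powersetCard k (Finset.univ : Finset (Fin n)), (∑ i ∈ sᶜ, H i)^2
      = ((n-2).choose (k-1) : ℝ) * ∑ i, (H i)^2 := by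
  have h1 : ∀ s : Finset (Fin n), (∑ i ∈ sᶜ, H i)^2
      = ∑ i, ∑ j, if i ∈ sᶜ ∧ j ∈ sᶜ then H i * H j else 0 := by
    intro s
    rw [sq, Finset.sum_mul_sum, sum_to_ite sᶜ]
    refine Finset.sum_congr rfl fun i _ => ?_
    by_cases h : i ∈ sᶜ
    · rw [if_pos h, sum_to_ite sᶜ]
      refine Finset.sum_congr rfl fun j _ => ?_
      by_cases h' : j ∈ sᶜ
      · rw [if_pos h', if_pos ⟨h, h'⟩]
      · rw [if_neg h', if_neg (by tauto)]
    · rw [if_neg h, eq_comm]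
      exact Finset.sum_eq_zero fun j _ => if_neg (by tauto)
  simp_rw [h1]
  rw [Finset.sum_comm]
  have h2 : ∀ i : Fin n,
      ∑ s ∈ Finset.powersetCard k (Finset.univ : Finset (Fin n)),
        ∑ j, (if i ∈ sᶜ ∧ j ∈ sᶜ then H i * H j else 0)
      = ∑ j, (if i = j then ((n-1).choose k : ℝ) else ((n-2).choose k : ℝ)) * (H i * H j) := by
    intro i
    rw [Finset.sum_comm]
    refine Finset.sum_congr rfl fun j _ => ?_
    rw [Finset.sum_ite, Finset.sum_const_zero, add_zero, Finset.sum_const, nsmul_eq_mul]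
    by_cases h : i = j
    · subst h
      rw [if_pos rfl]
      congr 1
      rw [show ((Finset.powersetCard k (Finset.univ : Finset (Fin n))).filter
          (fun s => i ∈ sᶜ ∧ i ∈ sᶜ)) = ((Finset.powersetCard k
          (Finset.univ : Finset (Fin n))).filter (fun s => i ∈ sᶜ)) by
        simp only [and_self]]
      rw [card_filter_notmem]
    · rw [if_neg h]
      congr 1
      rw [card_filter_notmem2 k h]
  simp_rw [h2]
  have h3 : ∀ i : Fin n, ∀ j : Fin n,
      (if i = j then ((n-1).choose k : ℝ) else ((n-2).choose k : ℝ)) * (H i * H j)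
      = ((n-2).choose k : ℝ) * (H i * H j)
        + (if i = j then (((n-1).choose k : ℝ) - ((n-2).choose k : ℝ)) * (H i * H i) else 0) := by
    intro i j
    by_cases h : i = j
    · subst h; rw [if_pos rfl, if_pos rfl]; ring
    · rw [if_neg h, if_neg h]; ring
  simp_rw [h3, Finset.sum_add_distrib]
  have h4 : ∑ i : Fin n, ∑ j : Fin n, ((n-2).choose k : ℝ) * (H i * H j) = 0 := by
    simp_rw [← Finset.mul_sum, ← Finset.sum_mul]
    rw [h0]
    ring
  have h5 : ∀ i : Fin n, ∑ j : Fin n,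
      (if i = j then (((n-1).choose k : ℝ) - ((n-2).choose k : ℝ)) * (H i * H i) else 0)
      = (((n-1).choose k : ℝ) - ((n-2).choose k : ℝ)) * (H i * H i) := by
    intro i
    rw [Finset.sum_ite_eq, if_pos (Finset.mem_univ i)]
  simp_rw [h4, h5]
  have hpascal : ((n-1).choose k : ℝ) - ((n-2).choose k : ℝ) = ((n-2).choose (k-1) : ℝ) := by
    have : (n-1).choose k = (n-2).choose (k-1) + (n-2).choose k := by
      have h6 := Nat.choose_succ_succ (n-2) (k-1)
      rw [Nat.succ_eq_add_one, Nat.succ_eq_add_one] at h6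
      rw [show n - 2 + 1 = n - 1 by omega, show k - 1 + 1 = k by omega] at h6
      exact h6
    rw [this]
    push_cast
    ring
  rw [zero_add, ← Finset.mul_sum, hpascal]
  congr 1
  exact Finset.sum_congr rfl fun i _ => by ring

instance {n : ℕ} : MeasurableSingletonClass (Finset (Fin n)) :=
  ⟨fun _ => MeasurableSpace.measurableSet_top⟩

lemma integral_comp_pair {Ω : Type*} [MeasurableSpace Ω] (μ : Measure Ω) [IsProbabilityMeasure μ]
    {n k : ℕ} (hk : 1 ≤ k) (hkn : k ≤ n - 1) (hn : 2 ≤ n)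
    (S T : Ω → Finset (Fin n)) (hS : Measurable S) (hT : Measurable T)
    (hjoint : ∀ s t : Finset (Fin n),
      μ {ω | S ω = s ∧ T ω = t} =
        if s ⊆ t ∧ s.card = k ∧ t.card = n - 1
          then ((n.choose (n - 1) : ENNReal) * ((n - 1).choose k : ENNReal))⁻¹ else 0)
    (φ : Finset (Fin n) → Finset (Fin n) → ℝ) :
    ∫ ω, φ (S ω) (T ω) ∂μ =
      ((n * (n-1).choose k : ℕ) : ℝ)⁻¹ *
        ∑ s ∈ Finset.powersetCard k (Finset.univ : Finset (Fin n)),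
          ∑ i ∈ sᶜ, φ s (Finset.univ.erase i) := by
  have hpair : Measurable (fun ω => (S ω, T ω)) := hS.prodMk hT
  have hmap : IsProbabilityMeasure (μ.map (fun ω => (S ω, T ω))) :=
    Measure.isProbabilityMeasure_map hpair.aemeasurable
  have h1 : ∫ ω, φ (S ω) (T ω) ∂μ
      = ∫ p : Finset (Fin n) × Finset (Fin n), φ p.1 p.2 ∂(μ.map (fun ω => (S ω, T ω))) := by
    rw [integral_map hpair.aemeasurable (measurable_of_countable _).aestronglyMeasurable]
  rw [h1, integral_fintype (Integrable.of_finite)]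
  have h2 : ∀ p : Finset (Fin n) × Finset (Fin n),
      ((μ.map (fun ω => (S ω, T ω))) {p}).toReal
      = if p.1 ⊆ p.2 ∧ p.1.card = k ∧ p.2.card = n - 1
          then ((n * (n-1).choose k : ℕ) : ℝ)⁻¹ else 0 := by
    intro p
    rw [Measure.map_apply hpair (measurableSet_singleton p)]
    have hpre : (fun ω => (S ω, T ω)) ⁻¹' {p} = {ω | S ω = p.1 ∧ T ω = p.2} := by
      ext ω
      simp [Prod.ext_iff]
    rw [hpre, hjoint p.1 p.2]
    split_ifs
    · have hcn : n.choose (n-1) = n := by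
        have h7 := Nat.choose_symm (by omega : n - 1 ≤ n)
        rw [show n - (n-1) = 1 by omega] at h7
        rw [← h7, Nat.choose_one_right]
      rw [hcn, ENNReal.toReal_inv, ENNReal.toReal_mul, ENNReal.toReal_natCast, ENNReal.toReal_natCast]
      push_cast
      ring_nf
    · simp
  simp_rw [Measure.real, h2, smul_eq_mul, ite_mul, zero_mul]
  rw [Fintype.sum_prod_type]
  have hinner : ∀ s : Finset (Fin n), s.card = k →
      ∑ t, (if s ⊆ t ∧ s.card = k ∧ t.card = n - 1
          then ((n * (n-1).choose k : ℕ) : ℝ)⁻¹ * φ s t else 0)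
        = ((n * (n-1).choose k : ℕ) : ℝ)⁻¹ * ∑ i ∈ sᶜ, φ s (Finset.univ.erase i) := by
    intro s hs
    simp only [hs, eq_self_iff_true, true_and, and_true]
    rw [Finset.sum_ite, Finset.sum_const_zero, add_zero, Finset.mul_sum]
    refine (Finset.sum_bij (fun (a : Fin n) (_ : a ∈ sᶜ) => Finset.univ.erase a)
      ?_ ?_ ?_ ?_).symm
    · intro a ha
      rw [Finset.mem_filter]
      refine ⟨Finset.mem_univ _, Finset.subset_erase.2 ⟨Finset.subset_univ s,
        Finset.mem_compl.1 ha⟩, ?_⟩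
      rw [Finset.card_erase_of_mem (Finset.mem_univ a), Finset.card_univ, Fintype.card_fin]
    · intro a ha b hb hab
      by_contra hne
      have : a ∈ Finset.univ.erase b := Finset.mem_erase.2 ⟨hne, Finset.mem_univ a⟩
      rw [← hab] at this
      exact (Finset.notMem_erase a _) this
    · intro t ht
      rw [Finset.mem_filter] at ht
      have hc : tᶜ.card = 1 := by
        rw [Finset.card_compl, ht.2.2, Fintype.card_fin]
        omega
      obtain ⟨a, ha⟩ := Finset.card_eq_one.1 hc
      refine ⟨a, Finset.mem_compl.2 (fun hmem => ?_), ?_⟩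
      · have : a ∈ tᶜ := by rw [ha]; exact Finset.mem_singleton_self a
        exact (Finset.mem_compl.1 this) (ht.2.1 hmem)
      · show Finset.univ.erase a = t
        rw [← Finset.compl_singleton, ← ha, compl_compl]
    · intro a _
      rfl
  have hinner0 : ∀ s : Finset (Fin n), s.card ≠ k →
      ∑ t, (if s ⊆ t ∧ s.card = k ∧ t.card = n - 1
          then ((n * (n-1).choose k : ℕ) : ℝ)⁻¹ * φ s t else 0) = 0 := by
    intro s hs
    exact Finset.sum_eq_zero fun t _ => if_neg (by tauto)
  calc ∑ s : Finset (Fin n), ∑ t, (if s ⊆ t ∧ s.card = k ∧ t.card = n - 1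
          then ((n * (n-1).choose k : ℕ) : ℝ)⁻¹ * φ s t else 0)
      = ∑ s : Finset (Fin n), (if s.card = k
          then ((n * (n-1).choose k : ℕ) : ℝ)⁻¹ * ∑ i ∈ sᶜ, φ s (Finset.univ.erase i)
          else 0) := by
        refine Finset.sum_congr rfl fun s _ => ?_
        by_cases hs : s.card = k
        · rw [if_pos hs, hinner s hs]
        · rw [if_neg hs, hinner0 s hs]
    _ = ∑ s ∈ Finset.univ.filter (fun s : Finset (Fin n) => s.card = k),
          ((n * (n-1).choose k : ℕ) : ℝ)⁻¹ * ∑ i ∈ sᶜ, φ s (Finset.univ.erase i) := by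
        rw [Finset.sum_filter]
    _ = ((n * (n-1).choose k : ℕ) : ℝ)⁻¹ * ∑ s ∈ Finset.powersetCard k
          (Finset.univ : Finset (Fin n)), ∑ i ∈ sᶜ, φ s (Finset.univ.erase i) := by
        rw [Finset.mul_sum]
        refine Finset.sum_congr ?_ fun _ _ => rfl
        ext s
        simp [Finset.mem_powersetCard, Finset.subset_univ]

lemma sum_centered_sq {β : Type*} (s : Finset β) (f : β → ℝ) (e : ℝ) :
    ∑ x ∈ s, (f x - e)^2
      = ∑ x ∈ s, (f x)^2 - 2*e*(∑ x ∈ s, f x) + (s.card : ℝ)*e^2 := by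
  have h : ∀ x ∈ s, (f x - e)^2 = (f x)^2 - 2*e*(f x) + e^2 := fun x _ => by ring
  rw [Finset.sum_congr rfl h, Finset.sum_add_distrib, Finset.sum_sub_distrib,
    ← Finset.mul_sum, Finset.sum_const, nsmul_eq_mul]

end Aux

set_option maxHeartbeats 1000000 in
/-- If `T` is a uniform `(n−1)`-subset of `[n]` and, given `T`, `S` is a uniform `k`-subset of
`T`, then `R(S,T) = √(k/((n−1)(n−k)))`. -/
theorem maxCorr_nested_uniform_subsets_coatom {Ω : Type*} [MeasurableSpace Ω]
    (μ : Measure Ω) [IsProbabilityMeasure μ] (n k : ℕ)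
    (hk : 1 ≤ k) (hkn : k ≤ n - 1) (hn : 2 ≤ n)
    (S T : Ω → Finset (Fin n)) (hS : Measurable S) (hT : Measurable T)
    (hjoint : ∀ s t : Finset (Fin n),
      μ {ω | S ω = s ∧ T ω = t} =
        if s ⊆ t ∧ s.card = k ∧ t.card = n - 1
          then ((n.choose (n - 1) : ENNReal) * ((n - 1).choose k : ENNReal))⁻¹ else 0) :
    maxCorr μ S T = Real.sqrt ((k : ℝ) / (((n : ℝ) - 1) * ((n : ℝ) - k))) := by
  classical
  have hkn' : k ≤ n := by omega
  set lam : ℝ := (k : ℝ) / (((n : ℝ) - 1) * ((n : ℝ) - k)) with hlam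
  set Sk := Finset.powersetCard k (Finset.univ : Finset (Fin n)) with hSk
  set N : ℝ := ((n * (n-1).choose k : ℕ) : ℝ) with hN
  set c1 : ℝ := (((n-1).choose k : ℕ) : ℝ) with hc1
  set c2 : ℝ := (((n-2).choose (k-1) : ℕ) : ℝ) with hc2
  set m : ℝ := ((n - k : ℕ) : ℝ) with hm
  -- basic positivity and identities
  have hc1pos : 0 < c1 := by
    rw [hc1]; exact_mod_cast Nat.choose_pos hkn
  have hc2pos : 0 < c2 := by
    rw [hc2]; exact_mod_cast Nat.choose_pos (by omega : k - 1 ≤ n - 2)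
  have hNpos : 0 < N := by
    rw [hN]
    exact_mod_cast Nat.mul_pos (by omega) (Nat.choose_pos hkn)
  have hmpos : 0 < m := by
    rw [hm]; exact_mod_cast (by omega : 0 < n - k)
  have hmR : m = (n : ℝ) - k := by rw [hm]; push_cast [Nat.cast_sub hkn']; ring
  have hn1R : ((n - 1 : ℕ) : ℝ) = (n : ℝ) - 1 := by
    push_cast [Nat.cast_sub (by omega : 1 ≤ n)]; ring
  have hNc : N = n * c1 := by rw [hN, hc1]; push_cast; ring
  have hCnk : m * ((Sk.card : ℕ) : ℝ) = N := by
    have hnat : (n - k) * (n.choose k) = n * ((n-1).choose k) := by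
      have h1 := Nat.add_one_mul_choose_eq (n-1) (n-1-k)
      rw [show n - 1 + 1 = n by omega,
        show n - 1 - k + 1 = n - k by omega] at h1
      rw [Nat.choose_symm (by omega : k ≤ n - 1)] at h1
      rw [Nat.choose_symm hkn'] at h1
      rw [mul_comm]
      exact h1.symm
    rw [hSk, Finset.card_powersetCard, Finset.card_univ, Fintype.card_fin, hm, hN]
    exact_mod_cast hnat
  have hid : lam * (m * c1) = c2 := by
    have hnat : (n - 1) * ((n-2).choose (k-1)) = k * ((n-1).choose k) := by
      have h1 := Nat.add_one_mul_choose_eq (n-2) (k-1)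
      rw [show n - 2 + 1 = n - 1 by omega,
        show k - 1 + 1 = k by omega] at h1
      rw [mul_comm k]
      exact h1
    have hcast : ((n : ℝ) - 1) * c2 = k * c1 := by
      rw [hc2, hc1, ← hn1R]
      exact_mod_cast hnat
    rw [hlam, hmR]
    have h1 : (n : ℝ) - 1 ≠ 0 := by
      have : (2 : ℝ) ≤ n := by exact_mod_cast hn
      nlinarith
    have h2 : (n : ℝ) - k ≠ 0 := by rw [← hmR]; exact hmpos.ne'
    field_simp
    nlinarith [hcast]
  have hlam_nonneg : 0 ≤ lam := by
    rw [hlam]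
    have h2 : (0:ℝ) < (n : ℝ) - k := by rw [← hmR]; exact hmpos
    have h1 : (0:ℝ) < (n : ℝ) - 1 := by
      have : (2 : ℝ) ≤ n := by exact_mod_cast hn
      nlinarith
    positivity
  have master : ∀ φ : Finset (Fin n) → Finset (Fin n) → ℝ,
      ∫ ω, φ (S ω) (T ω) ∂μ = N⁻¹ * ∑ s ∈ Sk, ∑ i ∈ sᶜ, φ s (Finset.univ.erase i) := by
    intro φ
    rw [hSk, hN]
    exact integral_comp_pair μ hk hkn hn S T hS hT hjoint φ
  have hmem : ∀ (f : Finset (Fin n) → ℝ) (X : Ω → Finset (Fin n)), Measurable X →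
      MemLp (f ∘ X) 2 μ := by
    intro f X hX
    obtain ⟨C, hC⟩ := Finite.exists_le (fun a : Finset (Fin n) => ‖f a‖)
    exact MemLp.of_bound ((measurable_of_countable f).comp hX).aestronglyMeasurable C
      (Filter.Eventually.of_forall fun ω => hC (X ω))
  have hconst : ∀ u : Finset (Fin n) → ℝ,
      ∑ s ∈ Sk, ∑ _i ∈ sᶜ, u s = m * ∑ s ∈ Sk, u s := by
    intro u
    rw [Finset.mul_sum]
    refine Finset.sum_congr rfl fun s hs => ?_
    rw [Finset.sum_const, nsmul_eq_mul]
    congr 1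
    rw [hSk] at hs
    rw [Finset.card_compl, Fintype.card_fin, (Finset.mem_powersetCard.1 hs).2, hm]
  have hmeanS : ∀ f : Finset (Fin n) → ℝ,
      ∫ ω, (f ∘ S) ω ∂μ = N⁻¹ * (m * ∑ s ∈ Sk, f s) := by
    intro f
    have h := master (fun s _ => f s)
    calc ∫ ω, (f ∘ S) ω ∂μ
        = ∫ ω, (fun (s _t : Finset (Fin n)) => f s) (S ω) (T ω) ∂μ := rfl
      _ = N⁻¹ * ∑ s ∈ Sk, ∑ i ∈ sᶜ,
            (fun (s _t : Finset (Fin n)) => f s) s (Finset.univ.erase i) := h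
      _ = N⁻¹ * (m * ∑ s ∈ Sk, f s) := by rw [hconst f]
  have hmeanT : ∀ g : Finset (Fin n) → ℝ,
      ∫ ω, (g ∘ T) ω ∂μ = N⁻¹ * (c1 * ∑ i, g (Finset.univ.erase i)) := by
    intro g
    have h := master (fun _ t => g t)
    calc ∫ ω, (g ∘ T) ω ∂μ
        = ∫ ω, (fun (_s t : Finset (Fin n)) => g t) (S ω) (T ω) ∂μ := rfl
      _ = N⁻¹ * ∑ s ∈ Sk, ∑ i ∈ sᶜ,
            (fun (_s t : Finset (Fin n)) => g t) s (Finset.univ.erase i) := h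
      _ = N⁻¹ * (c1 * ∑ i, g (Finset.univ.erase i)) := by
          rw [hSk, sum_compl_swap k (fun i => g (Finset.univ.erase i)), hc1]
  have hvarS : ∀ f : Finset (Fin n) → ℝ,
      variance (f ∘ S) μ
        = N⁻¹ * (m * ∑ s ∈ Sk, (f s - ∫ ω, (f ∘ S) ω ∂μ)^2) := by
    intro f
    rw [variance_eq_sub (hmem f S hS)]
    have hsq := hmeanS (fun s => (f s)^2)
    simp only [Function.comp_apply] at hsq
    simp only [Pi.pow_apply, Function.comp_apply]
    have hm1 := hmeanS f
    simp only [Function.comp_apply] at hm1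
    rw [hsq, hm1, sum_centered_sq]
    rw [show ((Sk.card : ℕ) : ℝ) = N / m by rw [← hCnk]; field_simp]
    have hN0 : N ≠ 0 := hNpos.ne'
    have hm0 : m ≠ 0 := hmpos.ne'
    field_simp
    ring
  have hvarT : ∀ g : Finset (Fin n) → ℝ,
      variance (g ∘ T) μ
        = N⁻¹ * (c1 * ∑ i, (g (Finset.univ.erase i) - ∫ ω, (g ∘ T) ω ∂μ)^2) := by
    intro g
    rw [variance_eq_sub (hmem g T hT)]
    have hsq := hmeanT (fun t => (g t)^2)
    simp only [Function.comp_apply] at hsq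
    simp only [Pi.pow_apply, Function.comp_apply]
    have hm1 := hmeanT g
    simp only [Function.comp_apply] at hm1
    rw [hsq, hm1, sum_centered_sq]
    rw [Finset.card_univ, Fintype.card_fin,
      show ((n : ℕ) : ℝ) = N / c1 by rw [hNc]; field_simp]
    have hN0 : N ≠ 0 := hNpos.ne'
    have hc10 : c1 ≠ 0 := hc1pos.ne'
    field_simp
    ring
  have hzero : ∀ g : Finset (Fin n) → ℝ,
      ∑ i, (g (Finset.univ.erase i) - ∫ ω, (g ∘ T) ω ∂μ) = 0 := by
    intro g
    rw [Finset.sum_sub_distrib, Finset.sum_const, Finset.card_univ, Fintype.card_fin,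
      nsmul_eq_mul, hmeanT g]
    have hN0 : N ≠ 0 := hNpos.ne'
    field_simp [hNc]
    rw [hNc]; ring
  have hnum : ∀ f g : Finset (Fin n) → ℝ,
      ∫ ω, ((f ∘ S) ω - ∫ ω', (f ∘ S) ω' ∂μ) * ((g ∘ T) ω - ∫ ω', (g ∘ T) ω' ∂μ) ∂μ
        = N⁻¹ * ∑ s ∈ Sk, (f s - ∫ ω', (f ∘ S) ω' ∂μ)
            * (∑ i ∈ sᶜ, (g (Finset.univ.erase i) - ∫ ω', (g ∘ T) ω' ∂μ)) := by
    intro f g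
    have h := master (fun s t => (f s - ∫ ω', (f ∘ S) ω' ∂μ) * (g t - ∫ ω', (g ∘ T) ω' ∂μ))
    calc ∫ ω, ((f ∘ S) ω - ∫ ω', (f ∘ S) ω' ∂μ) * ((g ∘ T) ω - ∫ ω', (g ∘ T) ω' ∂μ) ∂μ
        = ∫ ω, (fun s t => (f s - ∫ ω', (f ∘ S) ω' ∂μ) * (g t - ∫ ω', (g ∘ T) ω' ∂μ))
            (S ω) (T ω) ∂μ := rfl
      _ = N⁻¹ * ∑ s ∈ Sk, ∑ i ∈ sᶜ,
            (fun s t => (f s - ∫ ω', (f ∘ S) ω' ∂μ) * (g t - ∫ ω', (g ∘ T) ω' ∂μ))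
              s (Finset.univ.erase i) := h
      _ = _ := by
          congr 1
          refine Finset.sum_congr rfl fun s _ => ?_
          rw [Finset.mul_sum]
  have hbound : ∀ f g : Finset (Fin n) → ℝ, variance (f ∘ S) μ ≠ 0 →
      variance (g ∘ T) μ ≠ 0 → pearson μ (f ∘ S) (g ∘ T) ≤ Real.sqrt lam := by
    intro f g hvf hvg
    have hv1pos : 0 < variance (f ∘ S) μ := lt_of_le_of_ne (variance_nonneg _ _) (Ne.symm hvf)
    have hv2pos : 0 < variance (g ∘ T) μ := lt_of_le_of_ne (variance_nonneg _ _) (Ne.symm hvg)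
    set Ef : ℝ := ∫ ω', (f ∘ S) ω' ∂μ with hEf
    set Eg : ℝ := ∫ ω', (g ∘ T) ω' ∂μ with hEg
    set A : ℝ := ∑ s ∈ Sk, (f s - Ef)^2 with hA
    set B : ℝ := ∑ i, (g (Finset.univ.erase i) - Eg)^2 with hB
    set Num : ℝ := ∫ ω, ((f ∘ S) ω - Ef) * ((g ∘ T) ω - Eg) ∂μ with hNumDef
    have hV1 : variance (f ∘ S) μ = N⁻¹ * (m * A) := hvarS f
    have hV2 : variance (g ∘ T) μ = N⁻¹ * (c1 * B) := hvarT g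
    have hG0 : ∑ i, (g (Finset.univ.erase i) - Eg) = 0 := hzero g
    have hNumEq : Num = N⁻¹ * ∑ s ∈ Sk, (f s - Ef)
        * (∑ i ∈ sᶜ, (g (Finset.univ.erase i) - Eg)) := hnum f g
    have hCS : (∑ s ∈ Sk, (f s - Ef) * (∑ i ∈ sᶜ, (g (Finset.univ.erase i) - Eg)))^2
        ≤ A * (c2 * B) := by
      have h1 := Finset.sum_mul_sq_le_sq_mul_sq Sk (fun s => f s - Ef)
        (fun s => ∑ i ∈ sᶜ, (g (Finset.univ.erase i) - Eg))
      have h2 : ∑ s ∈ Sk, (∑ i ∈ sᶜ, (g (Finset.univ.erase i) - Eg))^2 = c2 * B := by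
        rw [hSk, hc2, hB]
        exact sum_compl_sq hn hk hkn (fun i => g (Finset.univ.erase i) - Eg) hG0
      calc (∑ s ∈ Sk, (f s - Ef) * (∑ i ∈ sᶜ, (g (Finset.univ.erase i) - Eg)))^2
          ≤ A * ∑ s ∈ Sk, (∑ i ∈ sᶜ, (g (Finset.univ.erase i) - Eg))^2 := h1
        _ = A * (c2 * B) := by rw [h2]
    have hNum2 : Num^2 ≤ lam * (variance (f ∘ S) μ * variance (g ∘ T) μ) := by
      rw [hNumEq, hV1, hV2, mul_pow]
      have e1 : lam * (N⁻¹ * (m * A) * (N⁻¹ * (c1 * B))) = N⁻¹^2 * (A * (c2 * B)) := by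
        rw [← hid]; ring
      rw [e1]
      exact mul_le_mul_of_nonneg_left hCS (by positivity)
    have hfinal : Num ≤ Real.sqrt lam *
        (Real.sqrt (variance (f ∘ S) μ) * Real.sqrt (variance (g ∘ T) μ)) := by
      have h3 : Num ≤ Real.sqrt (Num^2) := by
        rw [Real.sqrt_sq_eq_abs]; exact le_abs_self Num
      refine h3.trans ?_
      have h4 := Real.sqrt_le_sqrt hNum2
      rw [Real.sqrt_mul hlam_nonneg, Real.sqrt_mul hv1pos.le] at h4
      exact h4
    unfold pearson
    rw [div_le_iff₀ (mul_pos (Real.sqrt_pos.2 hv1pos) (Real.sqrt_pos.2 hv2pos))]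
    exact hfinal
  -- the witness achieving the maximum
  set i0 : Fin n := ⟨0, by omega⟩ with hi0
  set H0 : Fin n → ℝ := fun i => if i = i0 then (n : ℝ) - 1 else -1 with hH0
  set φ : Finset (Fin n) → ℝ := fun s => ∑ i ∈ sᶜ, H0 i with hφ
  have hH0sum : ∑ i, H0 i = 0 := by
    have h1 : ∀ i : Fin n, H0 i = (if i = i0 then (n : ℝ) else 0) - 1 := by
      intro i; rw [hH0]; by_cases h : i = i0 <;> simp [h]
    simp_rw [h1]
    rw [Finset.sum_sub_distrib, Finset.sum_ite_eq' Finset.univ i0 (fun _ => (n : ℝ)),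
      if_pos (Finset.mem_univ i0), Finset.sum_const, Finset.card_univ, Fintype.card_fin,
      nsmul_eq_mul]
    ring
  have hH0sq : ∑ i, (H0 i)^2 = (n : ℝ)^2 - n := by
    have h1 : ∀ i : Fin n, (H0 i)^2 = (if i = i0 then (n : ℝ)^2 - 2*n else 0) + 1 := by
      intro i; rw [hH0]; by_cases h : i = i0 <;> simp [h] <;> ring
    simp_rw [h1]
    rw [Finset.sum_add_distrib, Finset.sum_ite_eq' Finset.univ i0
      (fun _ => (n : ℝ)^2 - 2*n), if_pos (Finset.mem_univ i0), Finset.sum_const,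
      Finset.card_univ, Fintype.card_fin, nsmul_eq_mul]
    ring
  have hQpos : 0 < ∑ i, (H0 i)^2 := by
    rw [hH0sq]
    have h2 : (2 : ℝ) ≤ n := by exact_mod_cast hn
    nlinarith
  have hphi_erase : ∀ i : Fin n, φ (Finset.univ.erase i) = H0 i := by
    intro i
    rw [hφ]
    show ∑ j ∈ (Finset.univ.erase i)ᶜ, H0 j = H0 i
    rw [Finset.compl_erase, Finset.compl_univ]
    simp
  have hsum_phi : ∑ s ∈ Sk, φ s = c1 * ∑ i, H0 i := by
    rw [hSk, hc1, hφ]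
    exact sum_compl_swap k H0
  have hEf0 : ∫ ω, (φ ∘ S) ω ∂μ = 0 := by
    rw [hmeanS φ, hsum_phi, hH0sum]; ring
  have hEg0 : ∫ ω, (φ ∘ T) ω ∂μ = 0 := by
    rw [hmeanT φ]
    simp_rw [hphi_erase]
    rw [hH0sum]; ring
  have hsum_phi_sq : ∑ s ∈ Sk, (φ s)^2 = c2 * ∑ i, (H0 i)^2 := by
    rw [hSk, hc2, hφ]
    exact sum_compl_sq hn hk hkn H0 hH0sum
  have hV1w : variance (φ ∘ S) μ = N⁻¹ * (m * (c2 * ∑ i, (H0 i)^2)) := by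
    rw [hvarS φ, hEf0]
    simp_rw [sub_zero]
    rw [hsum_phi_sq]
  have hV2w : variance (φ ∘ T) μ = N⁻¹ * (c1 * ∑ i, (H0 i)^2) := by
    rw [hvarT φ, hEg0]
    simp_rw [sub_zero]
    simp_rw [hphi_erase]
  have hNumw : ∫ ω, ((φ ∘ S) ω - ∫ ω', (φ ∘ S) ω' ∂μ) * ((φ ∘ T) ω - ∫ ω', (φ ∘ T) ω' ∂μ) ∂μ
      = N⁻¹ * (c2 * ∑ i, (H0 i)^2) := by
    rw [hnum φ φ, hEf0, hEg0]
    simp_rw [sub_zero]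
    simp_rw [hphi_erase]
    rw [← hsum_phi_sq]
    congr 1
    exact Finset.sum_congr rfl fun s _ => by rw [hφ]; ring
  have hV1wpos : 0 < variance (φ ∘ S) μ := by
    rw [hV1w]
    have := hNpos
    positivity
  have hV2wpos : 0 < variance (φ ∘ T) μ := by
    rw [hV2w]
    have := hNpos
    positivity
  have hpearson : pearson μ (φ ∘ S) (φ ∘ T) = Real.sqrt lam := by
    unfold pearson
    rw [hNumw]
    have hprod : lam * (variance (φ ∘ S) μ * variance (φ ∘ T) μ)
        = (N⁻¹ * (c2 * ∑ i, (H0 i)^2))^2 := by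
      rw [hV1w, hV2w, ← hid]; ring
    have hD : Real.sqrt (variance (φ ∘ S) μ) * Real.sqrt (variance (φ ∘ T) μ)
        = Real.sqrt (variance (φ ∘ S) μ * variance (φ ∘ T) μ) :=
      (Real.sqrt_mul hV1wpos.le _).symm
    have hNumpos : 0 < N⁻¹ * (c2 * ∑ i, (H0 i)^2) := by
      have := hNpos
      positivity
    rw [hD]
    have h5 : Real.sqrt lam * Real.sqrt (variance (φ ∘ S) μ * variance (φ ∘ T) μ)
        = N⁻¹ * (c2 * ∑ i, (H0 i)^2) := by
      rw [← Real.sqrt_mul hlam_nonneg, hprod, Real.sqrt_sq hNumpos.le]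
    have hne : Real.sqrt (variance (φ ∘ S) μ * variance (φ ∘ T) μ) ≠ 0 := by
      refine ne_of_gt (Real.sqrt_pos.2 (mul_pos hV1wpos hV2wpos))
    rw [div_eq_iff hne]
    exact h5.symm
  set E : Set ℝ := {r | ∃ f : Finset (Fin n) → ℝ, ∃ g : Finset (Fin n) → ℝ,
      Measurable f ∧ Measurable g ∧ MemLp (f ∘ S) 2 μ ∧ MemLp (g ∘ T) 2 μ ∧
      variance (f ∘ S) μ ≠ 0 ∧ variance (g ∘ T) μ ≠ 0 ∧
      r = pearson μ (f ∘ S) (g ∘ T)} with hE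
  have hmemset : Real.sqrt lam ∈ E :=
    ⟨φ, φ, measurable_of_countable φ, measurable_of_countable φ, hmem φ S hS, hmem φ T hT,
      hV1wpos.ne', hV2wpos.ne', hpearson.symm⟩
  have hub : ∀ r ∈ E, r ≤ Real.sqrt lam := by
    rintro r ⟨f, g, _hfm, _hgm, _hf2, _hg2, hvf, hvg, rfl⟩
    exact hbound f g hvf hvg
  calc maxCorr μ S T = sSup E := rfl
    _ = Real.sqrt lam :=
        le_antisymm (csSup_le ⟨_, hmemset⟩ hub) (le_csSup ⟨_, hub⟩ hmemset)
end
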